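/- arXiv:1701.05836 — 6 statements merged into one kernel-verified Lean document; each statement's English description precedes it below -/
import Mathlib

section
/- Let $D \subset \mathbb{C}^n$ be an unbounded convex open set. If $v$ and $w$ are two directions at infinity for $D$ that are linearly independent over $\mathbb{R}$, then for every $R > 0$, the set $D \setminus \overline{B(0,R)}$ has exactly one unbounded connected component. -/
open scoped RealInnerProductSpace

section Aux

variable {E : Type*} [NormedAddCommGroup E] [InnerProductSpace ℝ E]

lemma aux_ray_norm (u y : E) (hu : ‖u‖ = 1) (s : ℝ) :
    ‖y‖ ^ 2 - ⟪y, u⟫ ^ 2 ≤ ‖y + s • u‖ ^ 2 := by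
  have h := norm_add_sq_real y (s • u)
  rw [real_inner_smul_right] at h
  have h2 : ‖s • u‖ = |s| := by rw [norm_smul, hu, Real.norm_eq_abs, mul_one]
  rw [h2] at h
  nlinarith [sq_abs s, sq_nonneg (s + ⟪y, u⟫)]

lemma aux_sub_smul_sq (u y : E) (hu : ‖u‖ = 1) (a : ℝ) :
    ‖y - a • u‖ ^ 2 = ‖y‖ ^ 2 - 2 * a * ⟪y, u⟫ + a ^ 2 := by
  have h := norm_sub_sq_real y (a • u)
  rw [real_inner_smul_right] at h
  have h2 : ‖a • u‖ = |a| := by rw [norm_smul, hu, Real.norm_eq_abs, mul_one]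
  rw [h2] at h
  nlinarith [sq_abs a]

lemma aux_mix_sq (u v' : E) (hu : ‖u‖ = 1) (hv : ‖v'‖ = 1) (s : ℝ) :
    ‖s • u + (1 - s) • v'‖ ^ 2
      = s ^ 2 + 2 * s * (1 - s) * ⟪u, v'⟫ + (1 - s) ^ 2 := by
  have h := norm_add_sq_real (s • u) ((1 - s) • v')
  rw [real_inner_smul_right, real_inner_smul_left] at h
  have h2 : ‖s • u‖ = |s| := by rw [norm_smul, hu, Real.norm_eq_abs, mul_one]
  have h3 : ‖(1 - s) • v'‖ = |1 - s| := by rw [norm_smul, hv, Real.norm_eq_abs, mul_one]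
  rw [h2, h3] at h
  nlinarith [sq_abs s, sq_abs (1 - s)]

end Aux

set_option maxHeartbeats 1000000 in
theorem stmt_2 (n : ℕ) (D : Set (EuclideanSpace ℂ (Fin n)))
    (hopen : IsOpen D) (hconv : Convex ℝ D) (hunb : ¬ Bornology.IsBounded D)
    (v w : EuclideanSpace ℂ (Fin n)) (hv : ‖v‖ = 1) (hw : ‖w‖ = 1)
    (hvdir : ∀ z ∈ D, ∀ t : ℝ, 0 ≤ t → z + t • v ∈ D)
    (hwdir : ∀ z ∈ D, ∀ t : ℝ, 0 ≤ t → z + t • w ∈ D)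
    (hindep : LinearIndependent ℝ ![v, w]) :
    ∀ R : ℝ, 0 < R →
      ∃! C : Set (EuclideanSpace ℂ (Fin n)),
        (∃ x ∈ D \ Metric.closedBall 0 R,
            C = connectedComponentIn (D \ Metric.closedBall 0 R) x) ∧
          ¬ Bornology.IsBounded C := by
  intro R hR
  set F : Set (EuclideanSpace ℂ (Fin n)) := D \ Metric.closedBall 0 R with hFdef
  have hmemF : ∀ p : EuclideanSpace ℂ (Fin n), p ∈ F ↔ p ∈ D ∧ R < ‖p‖ := by
    intro p
    simp only [hFdef, Set.mem_diff, Metric.mem_closedBall, dist_zero_right, not_le]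
  -- D is nonempty
  obtain ⟨z0, hz0⟩ : D.Nonempty := by
    rcases D.eq_empty_or_nonempty with h | h
    · exact absurd (h ▸ Bornology.isBounded_empty) hunb
    · exact h
  -- real inner product of the two directions
  set t0 : ℝ := ⟪v, w⟫ with ht0def
  have htle : |t0| ≤ 1 := by
    have h := abs_real_inner_le_norm v w
    rw [hv, hw, mul_one] at h
    rw [ht0def]
    exact h
  have hvw1 : v - w ≠ 0 := by
    intro h
    have h2 := (LinearIndependent.pair_iff.mp hindep) 1 (-1)
      (by rw [one_smul, neg_one_smul, ← sub_eq_add_neg]; exact h)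
    exact one_ne_zero h2.1
  have hvw2 : v + w ≠ 0 := by
    intro h
    have h2 := (LinearIndependent.pair_iff.mp hindep) 1 1 (by rwa [one_smul, one_smul])
    exact one_ne_zero h2.1
  have ht1 : t0 < 1 := by
    have h := norm_sub_sq_real v w
    rw [hv, hw] at h
    have h2 : 0 < ‖v - w‖ := norm_pos_iff.mpr hvw1
    nlinarith
  have ht2 : -1 < t0 := by
    have h := norm_add_sq_real v w
    rw [hv, hw] at h
    have h2 : 0 < ‖v + w‖ := norm_pos_iff.mpr hvw2
    nlinarith
  set δ : ℝ := 1 - |t0| with hδdef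
  have hδ : 0 < δ := by
    rcases abs_cases t0 with ⟨h, _⟩ | ⟨h, _⟩ <;> simp only [hδdef, h] <;> linarith
  have hδ1 : δ ≤ 1 := by
    have := abs_nonneg t0; simp only [hδdef]; linarith
  set K : ℝ := (4 * R + 1) / δ with hKdef
  have hKδ : K * δ = 4 * R + 1 := by
    rw [hKdef, div_mul_cancel₀ _ hδ.ne']
  have hK0 : 0 < K := div_pos (by linarith) hδ
  -- Key dichotomy: any far-away point has a safe escape direction
  have key : ∀ y : EuclideanSpace ℂ (Fin n), K < ‖y‖ →
      ∃ u : EuclideanSpace ℂ (Fin n), ‖u‖ = 1 ∧ (∀ z ∈ D, ∀ s : ℝ, 0 ≤ s → z + s • u ∈ D) ∧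
        (∀ s : ℝ, R < ‖y + s • u‖) ∧ -|t0| ≤ ⟪u, v⟫ := by
    intro y hyK
    have habs0 := abs_nonneg t0
    by_cases hcase : R ^ 2 < ‖y‖ ^ 2 - ⟪y, v⟫ ^ 2
    · refine ⟨v, hv, hvdir, fun s => ?_, by
        rw [real_inner_self_eq_norm_sq, hv]; linarith⟩
      have h := aux_ray_norm v y hv s
      nlinarith [norm_nonneg (y + s • v)]
    · by_cases hcase2 : R ^ 2 < ‖y‖ ^ 2 - ⟪y, w⟫ ^ 2
      · refine ⟨w, hw, hwdir, fun s => ?_, by rw [real_inner_comm]; linarith [neg_abs_le t0]⟩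
        have h := aux_ray_norm w y hw s
        nlinarith [norm_nonneg (y + s • w)]
      · exfalso
        push_neg at hcase hcase2
        set a : ℝ := ⟪y, v⟫ with hadef
        set b : ℝ := ⟪y, w⟫ with hbdef
        have h3 : ‖y - a • v‖ ≤ R := by
          have h := aux_sub_smul_sq v y hv a
          rw [← hadef] at h
          nlinarith [norm_nonneg (y - a • v)]
        have h4 : ‖y - b • w‖ ≤ R := by
          have h := aux_sub_smul_sq w y hw b
          rw [← hbdef] at h
          nlinarith [norm_nonneg (y - b • w)]
        have h5 : ‖a • v - b • w‖ ≤ 2 * R := by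
          have heq : a • v - b • w = (y - b • w) - (y - a • v) := by abel
          rw [heq]
          calc ‖(y - b • w) - (y - a • v)‖ ≤ ‖y - b • w‖ + ‖y - a • v‖ := norm_sub_le _ _
            _ ≤ 2 * R := by linarith
        have h6 : ‖a • v - b • w‖ ^ 2 = a ^ 2 - 2 * a * b * t0 + b ^ 2 := by
          have h := norm_sub_sq_real (a • v) (b • w)
          rw [real_inner_smul_left, real_inner_smul_right] at h
          have h2 : ‖a • v‖ = |a| := by rw [norm_smul, hv, Real.norm_eq_abs, mul_one]
          have h3' : ‖b • w‖ = |b| := by rw [norm_smul, hw, Real.norm_eq_abs, mul_one]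
          rw [h2, h3', ← ht0def] at h
          nlinarith [sq_abs a, sq_abs b]
        have habs : 2 * a * b * t0 ≤ |t0| * (a ^ 2 + b ^ 2) := by
          nlinarith [mul_nonneg (sub_nonneg.mpr (le_abs_self t0)) (sq_nonneg (a + b)),
            mul_nonneg (by linarith [neg_abs_le t0] : (0:ℝ) ≤ |t0| + t0) (sq_nonneg (a - b))]
        have h7 : δ * (a ^ 2 + b ^ 2) ≤ 4 * R ^ 2 := by
          have h5' : ‖a • v - b • w‖ ^ 2 ≤ 4 * R ^ 2 := by
            nlinarith [norm_nonneg (a • v - b • w)]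
          simp only [hδdef]
          nlinarith
        -- hence ‖y‖ is bounded, contradiction with K < ‖y‖
        have hN0 : (0:ℝ) ≤ ‖y‖ := norm_nonneg y
        have h9 : K ^ 2 < ‖y‖ ^ 2 := by nlinarith
        have h10 : δ ^ 2 * ‖y‖ ^ 2 ≤ 5 * R ^ 2 := by
          have hya : ‖y‖ ^ 2 - a ^ 2 ≤ R ^ 2 := hcase
          have hd2 : (0:ℝ) < δ ^ 2 := pow_pos hδ 2
          have e1 := mul_le_mul_of_nonneg_left hya hd2.le
          have e2 := mul_le_mul_of_nonneg_left h7 hδ.le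
          have e3 := mul_nonneg hd2.le (sq_nonneg b)
          have e4 := mul_nonneg (by linarith : (0:ℝ) ≤ 1 - δ) (sq_nonneg R)
          have e5 := mul_nonneg (mul_nonneg hδ.le (by linarith : (0:ℝ) ≤ 1 - δ)) (sq_nonneg R)
          nlinarith [e1, e2, e3, e4, e5]
        have h11 : δ ^ 2 * K ^ 2 = (4 * R + 1) ^ 2 := by
          linear_combination (K * δ + (4 * R + 1)) * hKδ
        nlinarith [mul_lt_mul_of_pos_left h9 (pow_pos hδ 2), mul_pos hR hR]
  -- the base point x far along direction v
  set T0 : ℝ := ‖z0‖ + R + 1 with hT0def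
  set x : EuclideanSpace ℂ (Fin n) := z0 + T0 • v with hxdef
  have hT0 : 0 ≤ T0 := by have := norm_nonneg z0; simp only [hT0def]; linarith
  have hxs : ∀ s : ℝ, 0 ≤ s → R + 1 + s ≤ ‖x + s • v‖ := by
    intro s hs
    have heq : x + s • v = z0 + (T0 + s) • v := by
      simp only [hxdef]; module
    rw [heq]
    have h1 : ‖(T0 + s) • v‖ = T0 + s := by
      rw [norm_smul, hv, Real.norm_eq_abs, mul_one, abs_of_nonneg (by linarith)]
    have h2 : ‖(T0 + s) • v‖ ≤ ‖z0 + (T0 + s) • v‖ + ‖z0‖ := by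
      have := norm_sub_le (z0 + (T0 + s) • v) z0
      simpa using this
    simp only [hT0def] at h1 ⊢
    linarith
  have hxD : ∀ s : ℝ, 0 ≤ s → x + s • v ∈ D := fun s hs =>
    hvdir x (hvdir z0 hz0 T0 hT0) s hs
  have hxF : x ∈ F := by
    rw [hmemF]
    refine ⟨hvdir z0 hz0 T0 hT0, ?_⟩
    have := hxs 0 le_rfl
    simp only [zero_smul, add_zero] at this
    linarith
  -- the ray from x
  have hraysub : (fun s : ℝ => x + s • v) '' Set.Ici 0 ⊆ F := by
    rintro p ⟨s, hs, rfl⟩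
    rw [hmemF]
    refine ⟨hxD s hs, ?_⟩
    have hs' : (0:ℝ) ≤ s := hs
    show R < ‖x + s • v‖
    linarith [hxs s hs']
  have hraycon : IsPreconnected ((fun s : ℝ => x + s • v) '' Set.Ici 0) :=
    (isPreconnected_Ici).image _ (by fun_prop : Continuous fun s : ℝ => x + s • v).continuousOn
  have hraymem : x ∈ (fun s : ℝ => x + s • v) '' Set.Ici 0 :=
    ⟨0, Set.mem_Ici.mpr le_rfl, by simp⟩
  have hraycomp : (fun s : ℝ => x + s • v) '' Set.Ici 0 ⊆ connectedComponentIn F x :=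
    hraycon.subset_connectedComponentIn hraymem hraysub
  have hCunb : ¬ Bornology.IsBounded (connectedComponentIn F x) := by
    intro hb
    obtain ⟨M, hM⟩ := isBounded_iff_forall_norm_le.mp (hb.subset hraycomp)
    have h1 := hM _ ⟨max 0 M, le_max_left 0 M, rfl⟩
    have h2 := hxs (max 0 M) (le_max_left 0 M)
    have := le_max_right 0 M
    linarith
  -- main connection lemma
  have connect : ∀ y, y ∈ F → K < ‖y‖ →
      connectedComponentIn F y = connectedComponentIn F x := by
    intro y hyF hyK
    have hyD : y ∈ D := ((hmemF y).mp hyF).1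
    obtain ⟨u, hu1, hudir, husafe, humix⟩ := key y hyK
    -- the mixed directions are bounded below
    have hmix : ∀ s : ℝ, s ∈ Set.Icc (0:ℝ) 1 → δ / 2 ≤ ‖s • u + (1 - s) • v‖ ^ 2 := by
      rintro s ⟨hs0, hs1⟩
      have h := aux_mix_sq u v hu1 hv s
      have habs0 := abs_nonneg t0
      nlinarith [mul_nonneg (mul_nonneg hs0 (by linarith : (0:ℝ) ≤ 1 - s))
        (by linarith : (0:ℝ) ≤ ⟪u, v⟫ + |t0|), sq_nonneg (2 * s - 1),
        mul_nonneg (by linarith : (0:ℝ) ≤ 1 + |t0|)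
          (by nlinarith [sq_nonneg (2 * s - 1)] : (0:ℝ) ≤ 1 / 4 - s * (1 - s))]
    set m : ℝ := Real.sqrt (δ / 2) with hmdef
    have hm0 : 0 < m := Real.sqrt_pos.mpr (by linarith)
    set B : ℝ := ‖y‖ + ‖x‖ with hBdef
    have hB0 : 0 ≤ B := by positivity
    set T : ℝ := (R + B + 1) / m with hTdef
    have hT : 0 ≤ T := le_of_lt (div_pos (by linarith) hm0)
    have hTm : T * m = R + B + 1 := div_mul_cancel₀ _ hm0.ne'
    have hmixnorm : ∀ s : ℝ, s ∈ Set.Icc (0:ℝ) 1 → m ≤ ‖s • u + (1 - s) • v‖ := by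
      intro s hs
      have h := hmix s hs
      calc m = Real.sqrt (δ / 2) := rfl
        _ ≤ Real.sqrt (‖s • u + (1 - s) • v‖ ^ 2) := Real.sqrt_le_sqrt h
        _ = ‖s • u + (1 - s) • v‖ := Real.sqrt_sq (norm_nonneg _)
    -- the three segments
    set S1 : Set (EuclideanSpace ℂ (Fin n)) := (fun s : ℝ => y + s • u) '' Set.Icc 0 T with hS1def
    set S2 : Set (EuclideanSpace ℂ (Fin n)) := (fun s : ℝ => s • (y + T • u) + (1 - s) • (x + T • v)) '' Set.Icc 0 1
      with hS2def
    set S3 : Set (EuclideanSpace ℂ (Fin n)) := (fun s : ℝ => x + s • v) '' Set.Icc 0 T with hS3def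
    have hS1sub : S1 ⊆ F := by
      rintro p ⟨s, ⟨hs0, _⟩, rfl⟩
      rw [hmemF]
      exact ⟨hudir y hyD s hs0, husafe s⟩
    have hS3sub : S3 ⊆ F := by
      rintro p ⟨s, ⟨hs0, _⟩, rfl⟩
      rw [hmemF]
      refine ⟨hxD s hs0, ?_⟩
      show R < ‖x + s • v‖
      linarith [hxs s hs0]
    have hS2sub : S2 ⊆ F := by
      rintro p ⟨s, ⟨hs0, hs1⟩, rfl⟩
      rw [hmemF]
      constructor
      · exact hconv (hudir y hyD T hT) (hxD T hT) hs0 (by linarith) (by ring)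
      · show R < ‖s • (y + T • u) + (1 - s) • (x + T • v)‖
        have heq : s • (y + T • u) + (1 - s) • (x + T • v)
            = (s • y + (1 - s) • x) + T • (s • u + (1 - s) • v) := by
          module
        rw [heq]
        have h1 : ‖T • (s • u + (1 - s) • v)‖ = T * ‖s • u + (1 - s) • v‖ := by
          rw [norm_smul, Real.norm_eq_abs, abs_of_nonneg hT]
        have h2 : R + B + 1 ≤ ‖T • (s • u + (1 - s) • v)‖ := by
          rw [h1, ← hTm]
          exact mul_le_mul_of_nonneg_left (hmixnorm s ⟨hs0, hs1⟩) hT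
        have h3 : ‖s • y + (1 - s) • x‖ ≤ B := by
          calc ‖s • y + (1 - s) • x‖ ≤ ‖s • y‖ + ‖(1 - s) • x‖ := norm_add_le _ _
            _ = s * ‖y‖ + (1 - s) * ‖x‖ := by
              rw [norm_smul, norm_smul, Real.norm_eq_abs, Real.norm_eq_abs,
                abs_of_nonneg hs0, abs_of_nonneg (by linarith)]
            _ ≤ B := by
              simp only [hBdef]
              nlinarith [norm_nonneg y, norm_nonneg x]
        have h4 : ‖T • (s • u + (1 - s) • v)‖
            ≤ ‖(s • y + (1 - s) • x) + T • (s • u + (1 - s) • v)‖ + ‖s • y + (1 - s) • x‖ := by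
          have := norm_sub_le ((s • y + (1 - s) • x) + T • (s • u + (1 - s) • v))
            (s • y + (1 - s) • x)
          simpa using this
        linarith
    have hS1con : IsPreconnected S1 :=
      (isPreconnected_Icc).image _ (by fun_prop : Continuous fun s : ℝ => y + s • u).continuousOn
    have hS2con : IsPreconnected S2 :=
      (isPreconnected_Icc).image _
        (by fun_prop :
          Continuous fun s : ℝ => s • (y + T • u) + (1 - s) • (x + T • v)).continuousOn
    have hS3con : IsPreconnected S3 :=
      (isPreconnected_Icc).image _ (by fun_prop : Continuous fun s : ℝ => x + s • v).continuousOn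
    have hp1 : y + T • u ∈ S1 := ⟨T, ⟨hT, le_rfl⟩, rfl⟩
    have hp2 : y + T • u ∈ S2 := ⟨1, ⟨zero_le_one, le_rfl⟩, by simp⟩
    have hp3 : x + T • v ∈ S2 := ⟨0, ⟨le_rfl, zero_le_one⟩, by simp⟩
    have hp4 : x + T • v ∈ S3 := ⟨T, ⟨hT, le_rfl⟩, rfl⟩
    have hS23 : IsPreconnected (S2 ∪ S3) :=
      IsPreconnected.union (x + T • v) hp3 hp4 hS2con hS3con
    have hS : IsPreconnected (S1 ∪ (S2 ∪ S3)) :=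
      IsPreconnected.union (y + T • u) hp1 (Or.inl hp2) hS1con hS23
    have hSsub : S1 ∪ (S2 ∪ S3) ⊆ F := by
      rintro p (hp | hp | hp)
      exacts [hS1sub hp, hS2sub hp, hS3sub hp]
    have hyS : y ∈ S1 ∪ (S2 ∪ S3) := Or.inl ⟨0, ⟨le_rfl, hT⟩, by simp⟩
    have hxS : x ∈ S1 ∪ (S2 ∪ S3) := Or.inr (Or.inr ⟨0, ⟨le_rfl, hT⟩, by simp⟩)
    have hxcomp : x ∈ connectedComponentIn F y :=
      hS.subset_connectedComponentIn hyS hSsub hxS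
    exact connectedComponentIn_eq hxcomp
  -- assemble
  refine ⟨connectedComponentIn F x, ⟨⟨x, hxF, rfl⟩, hCunb⟩, ?_⟩
  rintro C ⟨⟨x', hx'F, rfl⟩, hCunb'⟩
  have hy : ∃ y ∈ connectedComponentIn F x', K < ‖y‖ := by
    by_contra h
    push_neg at h
    exact hCunb' (isBounded_iff_forall_norm_le.mpr ⟨K, h⟩)
  obtain ⟨y, hyC, hyK⟩ := hy
  have hyF : y ∈ F := connectedComponentIn_subset F x' hyC
  rw [connectedComponentIn_eq hyC, connect y hyF hyK]
end

section
/- Let $D \subset \mathbb{C}^n$ be an unbounded convex open set. For every $R > 0$, the set $D \setminus \overline{B(0,R)}$ has at most two unbounded connected components. -/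
open Set Metric Bornology

lemma antipodal_key {E : Type*} [NormedAddCommGroup E] [NormedSpace ℝ E]
    {a b : E} {t R M : ℝ} (ht0 : 0 ≤ t) (ht1 : t ≤ 1)
    (hp : ‖(1 - t) • a + t • b‖ ≤ R) (hM : 0 < M) (ha : M ≤ ‖a‖) (hb : M ≤ ‖b‖) :
    ‖‖a‖⁻¹ • a + ‖b‖⁻¹ • b‖ ≤ 4 * R / M := by
  set p : E := (1 - t) • a + t • b with hpdef
  set u : E := a - b with hudef
  have ht1' : 0 ≤ 1 - t := by linarith
  have ha0 : 0 < ‖a‖ := lt_of_lt_of_le hM ha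
  have hb0 : 0 < ‖b‖ := lt_of_lt_of_le hM hb
  have hane : ‖a‖ ≠ 0 := ha0.ne'
  have hbne : ‖b‖ ≠ 0 := hb0.ne'
  have hR0 : 0 ≤ R := le_trans (norm_nonneg _) hp
  have hu_a : a - p = t • u := by rw [hpdef, hudef]; module
  have hu_b : b - p = -((1 - t) • u) := by rw [hpdef, hudef]; module
  have hnap : ‖a - p‖ = t * ‖u‖ := by
    rw [hu_a, norm_smul, Real.norm_eq_abs, abs_of_nonneg ht0]
  have hnbp : ‖b - p‖ = (1 - t) * ‖u‖ := by
    rw [hu_b, norm_neg, norm_smul, Real.norm_eq_abs, abs_of_nonneg ht1']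
  have h1 : ‖a‖ ≤ t * ‖u‖ + R := by
    have : ‖a‖ ≤ ‖a - p‖ + ‖p‖ := by
      calc ‖a‖ = ‖(a - p) + p‖ := by rw [sub_add_cancel]
        _ ≤ ‖a - p‖ + ‖p‖ := norm_add_le _ _
    rw [hnap] at this; linarith
  have h1' : t * ‖u‖ ≤ ‖a‖ + R := by
    have := norm_sub_le a p
    rw [hnap] at this; linarith
  have h2 : ‖b‖ ≤ (1 - t) * ‖u‖ + R := by
    have : ‖b‖ ≤ ‖b - p‖ + ‖p‖ := by
      calc ‖b‖ = ‖(b - p) + p‖ := by rw [sub_add_cancel]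
        _ ≤ ‖b - p‖ + ‖p‖ := norm_add_le _ _
    rw [hnbp] at this; linarith
  have h2' : (1 - t) * ‖u‖ ≤ ‖b‖ + R := by
    have := norm_sub_le b p
    rw [hnbp] at this; linarith
  have hkey : |t * ‖b‖ - (1 - t) * ‖a‖| ≤ R := by
    rw [abs_le]
    constructor
    · nlinarith [mul_le_mul_of_nonneg_left h2' ht0, mul_le_mul_of_nonneg_left h1 ht1']
    · nlinarith [mul_le_mul_of_nonneg_left h2 ht0, mul_le_mul_of_nonneg_left h1' ht1']
  have hcoef : |t * ‖a‖⁻¹ - (1 - t) * ‖b‖⁻¹| ≤ R * (‖a‖⁻¹ * ‖b‖⁻¹) := by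
    have heq : t * ‖a‖⁻¹ - (1 - t) * ‖b‖⁻¹
        = (t * ‖b‖ - (1 - t) * ‖a‖) * (‖a‖⁻¹ * ‖b‖⁻¹) := by
      field_simp
    rw [heq, abs_mul, abs_of_nonneg (by positivity : (0:ℝ) ≤ ‖a‖⁻¹ * ‖b‖⁻¹)]
    exact mul_le_mul_of_nonneg_right hkey (by positivity)
  have hsum : ‖a‖⁻¹ • a + ‖b‖⁻¹ • b
      = (‖a‖⁻¹ + ‖b‖⁻¹) • p + (t * ‖a‖⁻¹ - (1 - t) * ‖b‖⁻¹) • u := by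
    rw [hpdef, hudef]; module
  have hu_le : ‖u‖ ≤ ‖a‖ + ‖b‖ := norm_sub_le _ _
  have hainv : ‖a‖⁻¹ ≤ M⁻¹ := by
    rw [inv_le_inv₀ ha0 hM]; exact ha
  have hbinv : ‖b‖⁻¹ ≤ M⁻¹ := by
    rw [inv_le_inv₀ hb0 hM]; exact hb
  have step1 : |t * ‖a‖⁻¹ - (1 - t) * ‖b‖⁻¹| * ‖u‖
      ≤ (R * (‖a‖⁻¹ * ‖b‖⁻¹)) * (‖a‖ + ‖b‖) :=
    mul_le_mul hcoef hu_le (norm_nonneg u) (by positivity)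
  have step2 : (R * (‖a‖⁻¹ * ‖b‖⁻¹)) * (‖a‖ + ‖b‖) = R * ‖b‖⁻¹ + R * ‖a‖⁻¹ := by
    field_simp
  have step3 : (‖a‖⁻¹ + ‖b‖⁻¹) * ‖p‖ ≤ (‖a‖⁻¹ + ‖b‖⁻¹) * R :=
    mul_le_mul_of_nonneg_left hp (by positivity)
  have hRa : R * ‖a‖⁻¹ ≤ R * M⁻¹ := mul_le_mul_of_nonneg_left hainv hR0
  have hRb : R * ‖b‖⁻¹ ≤ R * M⁻¹ := mul_le_mul_of_nonneg_left hbinv hR0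
  calc ‖‖a‖⁻¹ • a + ‖b‖⁻¹ • b‖
      = ‖(‖a‖⁻¹ + ‖b‖⁻¹) • p + (t * ‖a‖⁻¹ - (1 - t) * ‖b‖⁻¹) • u‖ := by rw [hsum]
    _ ≤ ‖(‖a‖⁻¹ + ‖b‖⁻¹) • p‖ + ‖(t * ‖a‖⁻¹ - (1 - t) * ‖b‖⁻¹) • u‖ := norm_add_le _ _
    _ = (‖a‖⁻¹ + ‖b‖⁻¹) * ‖p‖ + |t * ‖a‖⁻¹ - (1 - t) * ‖b‖⁻¹| * ‖u‖ := by
        rw [norm_smul, norm_smul, Real.norm_eq_abs, Real.norm_eq_abs,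
          abs_of_nonneg (by positivity : (0:ℝ) ≤ ‖a‖⁻¹ + ‖b‖⁻¹)]
    _ ≤ 4 * R / M := by
        rw [div_eq_mul_inv]
        nlinarith [step1, step2, step3]

theorem stmt_3 (n : ℕ) (D : Set (EuclideanSpace ℂ (Fin n)))
    (hopen : IsOpen D) (hconv : Convex ℝ D) (hunb : ¬ Bornology.IsBounded D)
    (R : ℝ) (hR : 0 < R) :
    ∀ x ∈ D \ Metric.closedBall 0 R, ∀ y ∈ D \ Metric.closedBall 0 R,
      ∀ z ∈ D \ Metric.closedBall 0 R,
      ¬ Bornology.IsBounded (connectedComponentIn (D \ Metric.closedBall 0 R) x) →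
      ¬ Bornology.IsBounded (connectedComponentIn (D \ Metric.closedBall 0 R) y) →
      ¬ Bornology.IsBounded (connectedComponentIn (D \ Metric.closedBall 0 R) z) →
      connectedComponentIn (D \ Metric.closedBall 0 R) x =
          connectedComponentIn (D \ Metric.closedBall 0 R) y ∨
        connectedComponentIn (D \ Metric.closedBall 0 R) x =
          connectedComponentIn (D \ Metric.closedBall 0 R) z ∨
        connectedComponentIn (D \ Metric.closedBall 0 R) y =
          connectedComponentIn (D \ Metric.closedBall 0 R) z := by
  intro x hx y hy z hz hbx hby hbz
  set S := D \ Metric.closedBall 0 R with hS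
  by_contra hcon
  push_neg at hcon
  obtain ⟨hxy, hxz, hyz⟩ := hcon
  have far : ∀ w, ¬ Bornology.IsBounded (connectedComponentIn S w) →
      ∃ a ∈ connectedComponentIn S w, 10 * R < ‖a‖ := by
    intro w hb
    by_contra h
    push_neg at h
    exact hb ((isBounded_closedBall (x := (0 : EuclideanSpace ℂ (Fin n)))
      (r := 10 * R)).subset (fun a haC => mem_closedBall_zero_iff.2 (h a haC)))
  obtain ⟨a, haC, hna⟩ := far x hbx
  obtain ⟨b, hbC, hnb⟩ := far y hby
  obtain ⟨c, hcC, hnc⟩ := far z hbz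
  have haS : a ∈ S := connectedComponentIn_subset S x haC
  have hbS : b ∈ S := connectedComponentIn_subset S y hbC
  have hcS : c ∈ S := connectedComponentIn_subset S z hcC
  have hax : connectedComponentIn S x = connectedComponentIn S a := connectedComponentIn_eq haC
  have hby' : connectedComponentIn S y = connectedComponentIn S b := connectedComponentIn_eq hbC
  have hcz : connectedComponentIn S z = connectedComponentIn S c := connectedComponentIn_eq hcC
  have seg : ∀ u ∈ S, ∀ v ∈ S,
      connectedComponentIn S u ≠ connectedComponentIn S v →
      ∃ t : ℝ, 0 ≤ t ∧ t ≤ 1 ∧ ‖(1 - t) • u + t • v‖ ≤ R := by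
    intro u hu v hv hne
    by_contra h
    push_neg at h
    have hsub : segment ℝ u v ⊆ S := by
      intro p hpseg
      refine ⟨hconv.segment_subset hu.1 hv.1 hpseg, ?_⟩
      rw [segment_eq_image] at hpseg
      obtain ⟨t, ht, rfl⟩ := hpseg
      intro hball
      exact absurd (mem_closedBall_zero_iff.1 hball) (not_le.2 (h t ht.1 ht.2))
    have hmem : v ∈ connectedComponentIn S u :=
      (convex_segment u v).isPreconnected.subset_connectedComponentIn
        (left_mem_segment ℝ u v) hsub (right_mem_segment ℝ u v)
    exact hne (connectedComponentIn_eq hmem)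
  have hab : connectedComponentIn S a ≠ connectedComponentIn S b := by
    rw [← hax, ← hby']; exact hxy
  have hac : connectedComponentIn S a ≠ connectedComponentIn S c := by
    rw [← hax, ← hcz]; exact hxz
  have hbc : connectedComponentIn S b ≠ connectedComponentIn S c := by
    rw [← hby', ← hcz]; exact hyz
  obtain ⟨t1, ht10, ht11, hp1⟩ := seg a haS b hbS hab
  obtain ⟨t2, ht20, ht21, hp2⟩ := seg a haS c hcS hac
  obtain ⟨t3, ht30, ht31, hp3⟩ := seg b hbS c hcS hbc
  have hM : (0:ℝ) < 10 * R := by linarith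
  have k1 := antipodal_key ht10 ht11 hp1 hM hna.le hnb.le
  have k2 := antipodal_key ht20 ht21 hp2 hM hna.le hnc.le
  have k3 := antipodal_key ht30 ht31 hp3 hM hnb.le hnc.le
  have hval : 4 * R / (10 * R) = 2 / 5 := by
    rw [div_eq_div_iff (by linarith) (by norm_num)]
    ring
  rw [hval] at k1 k2 k3
  set A := ‖a‖⁻¹ • a with hA
  set B := ‖b‖⁻¹ • b with hB
  set C := ‖c‖⁻¹ • c with hC
  have hnA : ‖A‖ = 1 := by
    rw [hA, norm_smul, norm_inv, norm_norm, inv_mul_cancel₀]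
    exact ne_of_gt (by linarith)
  have hsplit : A + A = (A + B) + (A + C) - (B + C) := by abel
  have hAA : ‖A + A‖ = 2 := by
    rw [← two_smul ℝ A, norm_smul, hnA]
    norm_num
  have hle : ‖A + A‖ ≤ ‖A + B‖ + ‖A + C‖ + ‖B + C‖ := by
    rw [hsplit]
    calc ‖(A + B) + (A + C) - (B + C)‖ ≤ ‖(A + B) + (A + C)‖ + ‖B + C‖ := norm_sub_le _ _
      _ ≤ ‖A + B‖ + ‖A + C‖ + ‖B + C‖ := by
          have := norm_add_le (A + B) (A + C); linarith
  rw [hAA] at hle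
  linarith
end

section
/- Let $D \subset \mathbb{C}^n$ be an unbounded convex open set, and suppose that for some $R > 0$ the set $D \setminus \overline{B(0,R)}$ has two unbounded connected components. Then there exists a unit vector $v$ such that the only directions at infinity for $D$ are $v$ and $-v$. -/
open scoped RealInnerProductSpace

lemma mid_sq {A B I R θ : ℝ} (hA : 2*R^2 < A) (hB : 2*R^2 < B) (hI : 0 ≤ I)
    (hθ0 : 0 ≤ θ) (hθ1 : θ ≤ 1) :
    R^2 < (1-θ)^2*A + θ^2*B + 2*((1-θ)*(θ*I)) := by
  have hcross : 0 ≤ (1-θ)*(θ*I) := mul_nonneg (by linarith) (mul_nonneg hθ0 hI)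
  rcases le_or_gt θ (1/2) with h | h
  · nlinarith [sq_nonneg (1-2*θ), sq_nonneg θ, mul_nonneg (sq_nonneg θ) (by nlinarith : (0:ℝ) ≤ B - 2*R^2)]
  · nlinarith [sq_nonneg (1-2*θ), sq_nonneg (1-θ), mul_nonneg (sq_nonneg (1-θ)) (by nlinarith : (0:ℝ) ≤ A - 2*R^2)]

variable {E : Type*} [NormedAddCommGroup E] [InnerProductSpace ℝ E]

lemma ray_sq {z u : E} (hu : ‖u‖ = 1) {δ : ℝ} (hδ1 : δ ≤ 1)
    (hi : -(1-δ)*‖z‖ ≤ ⟪z,u⟫) {t : ℝ} (ht : 0 ≤ t) :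
    δ*‖z‖^2 + δ*t^2 ≤ ‖z + t • u‖^2 := by
  have h := norm_add_sq_real z (t • u)
  rw [real_inner_smul_right] at h
  have hn : ‖t • u‖ = t := by
    rw [norm_smul, hu, Real.norm_of_nonneg ht, mul_one]
  rw [hn] at h
  nlinarith [sq_nonneg (‖z‖ - t), norm_nonneg z, mul_le_mul_of_nonneg_left hi ht]

lemma connect_comp {D : Set E} (hconv : Convex ℝ D) {R : ℝ} (hR : 0 < R)
    {u : E} (hu : ‖u‖ = 1) (hrec : ∀ z ∈ D, ∀ t : ℝ, 0 ≤ t → z + t • u ∈ D)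
    {δ : ℝ} (hδ1 : δ ≤ 1)
    {z p : E} (hz : z ∈ D) (hp : p ∈ D)
    (hzi : -(1-δ)*‖z‖ ≤ ⟪z,u⟫) (hpi : -(1-δ)*‖p‖ ≤ ⟪p,u⟫)
    (hzR : 2*R^2 < δ*‖z‖^2) (hpR : 2*R^2 < δ*‖p‖^2) :
    connectedComponentIn (D \ Metric.closedBall 0 R) z
      = connectedComponentIn (D \ Metric.closedBall 0 R) p := by
  have hδ0 : 0 < δ := by
    by_contra h
    push_neg at h
    nlinarith [sq_nonneg ‖z‖]
  set S := D \ Metric.closedBall (0:E) R with hS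
  have hmemS : ∀ w : E, w ∈ D → R^2 < ‖w‖^2 → w ∈ S := by
    intro w hwD hwn
    refine ⟨hwD, ?_⟩
    simp only [Metric.mem_closedBall, dist_zero_right, not_le]
    nlinarith [norm_nonneg w]
  set T : ℝ := 2*(‖z‖+‖p‖)+1 with hT
  have hT0 : (0:ℝ) ≤ T := by positivity
  -- rays
  have hray : ∀ (q : E), q ∈ D → -(1-δ)*‖q‖ ≤ ⟪q,u⟫ → 2*R^2 < δ*‖q‖^2 →
      segment ℝ q (q + T • u) ⊆ S := by
    intro q hqD hqi hqR w hw
    rw [segment_eq_image'] at hw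
    obtain ⟨θ, hθ, rfl⟩ := hw
    simp only [add_sub_cancel_left, smul_smul]
    have htθ : 0 ≤ θ * T := mul_nonneg hθ.1 hT0
    refine hmemS _ (hrec q hqD _ htθ) ?_
    have := ray_sq hu hδ1 hqi htθ
    nlinarith [sq_nonneg (θ*T)]
  have hs1 : segment ℝ z (z + T • u) ⊆ S := hray z hz hzi hzR
  have hs3 : segment ℝ p (p + T • u) ⊆ S := hray p hp hpi hpR
  have hzTD : z + T • u ∈ D := hrec z hz T hT0
  have hpTD : p + T • u ∈ D := hrec p hp T hT0
  -- endpoint norms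
  have hA : 2*R^2 < ‖z + T • u‖^2 := by
    have := ray_sq hu hδ1 hzi hT0
    nlinarith [sq_nonneg T]
  have hB : 2*R^2 < ‖p + T • u‖^2 := by
    have := ray_sq hu hδ1 hpi hT0
    nlinarith [sq_nonneg T]
  -- middle inner product nonneg
  have hab : (0:ℝ) ≤ ⟪z + T • u, p + T • u⟫ := by
    have hexp : ⟪z + T • u, p + T • u⟫ = ⟪z,p⟫ + T*⟪u,p⟫ + T*⟪z,u⟫ + T*(T*⟪u,u⟫) := by
      simp only [inner_add_left, inner_add_right, real_inner_smul_left,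
        real_inner_smul_right]
      ring
    have huu : ⟪u,u⟫ = 1 := by
      rw [real_inner_self_eq_norm_sq, hu]; norm_num
    have h1 : -( ‖z‖*‖p‖) ≤ ⟪z,p⟫ := by
      have := abs_real_inner_le_norm z p
      cases abs_le.mp this with
      | intro h _ => linarith
    have h2 : -‖z‖ ≤ ⟪z,u⟫ := by
      have := abs_real_inner_le_norm z u
      rw [hu, mul_one] at this
      cases abs_le.mp this with
      | intro h _ => linarith
    have h3 : -‖p‖ ≤ ⟪u,p⟫ := by
      have := abs_real_inner_le_norm u p
      rw [hu, one_mul] at this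
      cases abs_le.mp this with
      | intro h _ => linarith
    rw [hexp, huu]
    nlinarith [norm_nonneg z, norm_nonneg p]
  -- middle segment
  have hs2 : segment ℝ (z + T • u) (p + T • u) ⊆ S := by
    intro w hw
    rw [segment_eq_image] at hw
    obtain ⟨θ, hθ, rfl⟩ := hw
    simp only []
    refine hmemS _ (hconv hzTD hpTD (by linarith [hθ.2]) hθ.1 (by ring)) ?_
    set a := z + T • u
    set b := p + T • u
    have hex : ‖(1-θ) • a + θ • b‖^2
        = (1-θ)^2*‖a‖^2 + θ^2*‖b‖^2 + 2*((1-θ)*(θ*⟪a,b⟫)) := by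
      have h := norm_add_sq_real ((1-θ) • a) (θ • b)
      rw [real_inner_smul_left, real_inner_smul_right, norm_smul, norm_smul,
        Real.norm_of_nonneg (by linarith [hθ.2] : (0:ℝ) ≤ 1-θ),
        Real.norm_of_nonneg hθ.1] at h
      rw [h]; ring
    rw [hex]
    exact mid_sq hA hB hab hθ.1 hθ.2
  -- assemble
  have hc1 : IsPreconnected (segment ℝ z (z + T • u)) := (convex_segment _ _).isPreconnected
  have hc2 : IsPreconnected (segment ℝ (z + T • u) (p + T • u)) := (convex_segment _ _).isPreconnected
  have hc3 : IsPreconnected (segment ℝ p (p + T • u)) := (convex_segment _ _).isPreconnected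
  have h12 : IsPreconnected (segment ℝ z (z + T • u) ∪ segment ℝ (z + T • u) (p + T • u)) :=
    IsPreconnected.union (z + T • u) (right_mem_segment ℝ _ _) (left_mem_segment ℝ _ _) hc1 hc2
  have h123 : IsPreconnected ((segment ℝ z (z + T • u) ∪ segment ℝ (z + T • u) (p + T • u))
      ∪ segment ℝ p (p + T • u)) :=
    IsPreconnected.union (p + T • u) (Or.inr (right_mem_segment ℝ _ _))
      (right_mem_segment ℝ _ _) h12 hc3
  have hKsub : ((segment ℝ z (z + T • u) ∪ segment ℝ (z + T • u) (p + T • u))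
      ∪ segment ℝ p (p + T • u)) ⊆ S :=
    Set.union_subset (Set.union_subset hs1 hs2) hs3
  have hzK : z ∈ ((segment ℝ z (z + T • u) ∪ segment ℝ (z + T • u) (p + T • u))
      ∪ segment ℝ p (p + T • u)) := Or.inl (Or.inl (left_mem_segment ℝ _ _))
  have hpK : p ∈ ((segment ℝ z (z + T • u) ∪ segment ℝ (z + T • u) (p + T • u))
      ∪ segment ℝ p (p + T • u)) := Or.inr (left_mem_segment ℝ _ _)
  exact connectedComponentIn_eq ((h123.subset_connectedComponentIn hzK hKsub) hpK)

variable {E : Type*} [NormedAddCommGroup E] [InnerProductSpace ℝ E]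

lemma exists_far_dir [FiniteDimensional ℝ E] {C : Set E} (hC : ¬ Bornology.IsBounded C) :
    ∃ v : E, ‖v‖ = 1 ∧ ∀ ε > (0:ℝ), ∀ M : ℝ, ∃ z ∈ C, M < ‖z‖ ∧ ‖‖z‖⁻¹ • z - v‖ < ε := by
  have h : ∀ M : ℝ, ∃ z ∈ C, M < ‖z‖ := by
    intro M
    rw [isBounded_iff_forall_norm_le] at hC
    push_neg at hC
    obtain ⟨z, hz, hn⟩ := hC M
    exact ⟨z, hz, hn⟩
  choose f hf1 hf2 using fun k : ℕ => h k
  have hfpos : ∀ k : ℕ, (0:ℝ) < ‖f k‖ := fun k => (Nat.cast_nonneg k).trans_lt (hf2 k)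
  have hmem : ∀ k : ℕ, ‖f k‖⁻¹ • f k ∈ Metric.sphere (0:E) 1 := by
    intro k
    rw [mem_sphere_zero_iff_norm, norm_smul, norm_inv, norm_norm,
      inv_mul_cancel₀ (hfpos k).ne']
  obtain ⟨v, hv, φ, hφ, htend⟩ := (isCompact_sphere (0:E) 1).tendsto_subseq hmem
  refine ⟨v, mem_sphere_zero_iff_norm.mp hv, ?_⟩
  intro ε hε M
  obtain ⟨N, hN⟩ := Metric.tendsto_atTop.mp htend ε hε
  obtain ⟨m, hm⟩ := exists_nat_gt M
  set k := φ (max N m) with hk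
  refine ⟨f k, hf1 k, ?_, ?_⟩
  · calc M < (m:ℝ) := hm
      _ ≤ (max N m : ℕ) := by exact_mod_cast Nat.le_max_right N m
      _ ≤ (k:ℝ) := by exact_mod_cast hφ.le_apply
      _ < ‖f k‖ := hf2 k
  · have := hN (max N m) (Nat.le_max_left N m)
    rwa [Function.comp_apply, dist_eq_norm] at this

variable {E : Type*} [NormedAddCommGroup E] [InnerProductSpace ℝ E]

lemma mem_rec {D : Set E} (hopen : IsOpen D) (hconv : Convex ℝ D) {C : Set E} (hCD : C ⊆ D)
    {v : E} (happ : ∀ ε > (0:ℝ), ∀ M : ℝ, ∃ z ∈ C, M < ‖z‖ ∧ ‖‖z‖⁻¹ • z - v‖ < ε) :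
    ∀ z ∈ D, ∀ t : ℝ, 0 ≤ t → z + t • v ∈ D := by
  have hcl : ∀ z ∈ D, ∀ t : ℝ, 0 ≤ t → z + t • v ∈ closure D := by
    intro z hz t ht
    rw [Metric.mem_closure_iff]
    intro ε hε
    rcases eq_or_lt_of_le ht with h0 | htpos
    · exact ⟨z, hz, by simp [← h0, hε]⟩
    obtain ⟨z', hz'C, hz'n, hz'd⟩ := happ (ε/(2*t)) (by positivity)
      (max t (2*t*‖z‖/ε))
    have h1 : t < ‖z'‖ := (le_max_left _ _).trans_lt hz'n
    have h2 : 2*t*‖z‖/ε < ‖z'‖ := (le_max_right _ _).trans_lt hz'n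
    have hz'pos : 0 < ‖z'‖ := htpos.trans h1
    set s : ℝ := t / ‖z'‖ with hs
    have hs0 : 0 ≤ s := by positivity
    have hs1 : s ≤ 1 := by
      rw [hs, div_le_one hz'pos]; exact h1.le
    have hmemD : (1-s) • z + s • z' ∈ D :=
      hconv hz (hCD hz'C) (by linarith) hs0 (by ring)
    refine ⟨(1-s) • z + s • z', hmemD, ?_⟩
    have hrepr : (1-s) • z + s • z' - (z + t • v) = t • (‖z'‖⁻¹ • z' - v) - s • z := by
      rw [hs]
      rw [smul_sub, smul_smul]
      rw [div_eq_mul_inv, mul_comm t ‖z'‖⁻¹]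
      module
    rw [dist_comm, dist_eq_norm, hrepr]
    have hb1 : ‖t • (‖z'‖⁻¹ • z' - v)‖ < ε/2 := by
      rw [norm_smul, Real.norm_of_nonneg ht]
      calc t * ‖‖z'‖⁻¹ • z' - v‖ < t * (ε/(2*t)) := by
            exact (mul_lt_mul_iff_right₀ htpos).mpr hz'd
        _ = ε/2 := by field_simp
    have hb2 : ‖s • z‖ < ε/2 := by
      rw [norm_smul, Real.norm_of_nonneg hs0, hs, div_mul_eq_mul_div,
        div_lt_iff₀ hz'pos]
      have := (div_lt_iff₀ hε).mp h2
      nlinarith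
    calc ‖t • (‖z'‖⁻¹ • z' - v) - s • z‖ ≤ ‖t • (‖z'‖⁻¹ • z' - v)‖ + ‖s • z‖ :=
          norm_sub_le _ _
      _ < ε/2 + ε/2 := add_lt_add hb1 hb2
      _ = ε := by ring
  intro z hz t ht
  have h2 := hcl z hz (t+1) (by linarith)
  have ha : (0:ℝ) < 1/(t+1) := by positivity
  have hb : (0:ℝ) ≤ t/(t+1) := by positivity
  have hab : 1/(t+1) + t/(t+1) = 1 := by field_simp; ring
  have key := hconv.combo_interior_closure_mem_interior
    (by rwa [hopen.interior_eq]) h2 ha hb hab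
  rw [hopen.interior_eq] at key
  have heq : (1/(t+1)) • z + (t/(t+1)) • (z + (t+1) • v) = z + t • v := by
    have h1 : t + 1 ≠ 0 := by positivity
    rw [smul_add, smul_smul, div_mul_cancel₀ _ h1, ← add_assoc, ← add_smul, hab, one_smul]
  rwa [heq] at key

section helpers
variable {E : Type*} [NormedAddCommGroup E] [InnerProductSpace ℝ E]

-- key step extracting quantitative data for a direction
lemma far_point_data {C : Set E} {v u : E} (hv : ‖v‖ = 1) (hu : ‖u‖ = 1)
    (happ : ∀ ε > (0:ℝ), ∀ M : ℝ, ∃ z ∈ C, M < ‖z‖ ∧ ‖‖z‖⁻¹ • z - v‖ < ε)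
    {δ : ℝ} (hδ0 : 0 < δ) (hδv : δ ≤ (1 + ⟪v,u⟫)/2) {R : ℝ} (hR : 0 < R) :
    ∃ z ∈ C, -(1-δ)*‖z‖ ≤ ⟪z,u⟫ ∧ 2*R^2 < δ*‖z‖^2 := by
  obtain ⟨z, hzC, hzM, hzd⟩ := happ δ hδ0 (Real.sqrt (2*R^2/δ))
  have hzpos : 0 < ‖z‖ := (Real.sqrt_nonneg _).trans_lt hzM
  refine ⟨z, hzC, ?_, ?_⟩
  · have hsplit : ⟪(‖z‖⁻¹ • z : E), u⟫ = ⟪v,u⟫ + ⟪‖z‖⁻¹ • z - v, u⟫ := by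
      rw [inner_sub_left]; ring
    have hbound : |⟪‖z‖⁻¹ • z - v, u⟫| ≤ ‖‖z‖⁻¹ • z - v‖ := by
      have := abs_real_inner_le_norm (‖z‖⁻¹ • z - v) u
      rwa [hu, mul_one] at this
    have h1 : -(1-δ) ≤ ⟪(‖z‖⁻¹ • z : E), u⟫ := by
      have := abs_le.mp hbound
      rw [hsplit]
      linarith [hzd]
    have h2 : ⟪(‖z‖⁻¹ • z : E), u⟫ = ‖z‖⁻¹ * ⟪z,u⟫ := real_inner_smul_left z u _
    rw [h2] at h1
    calc -(1-δ)*‖z‖ ≤ (‖z‖⁻¹ * ⟪z,u⟫) * ‖z‖ :=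
          mul_le_mul_of_nonneg_right h1 hzpos.le
      _ = ⟪z,u⟫ := by field_simp
  · have h := (Real.sqrt_lt' hzpos).mp hzM
    rw [div_lt_iff₀ hδ0] at h
    nlinarith
end helpers

theorem stmt_4 (n : ℕ) (D : Set (EuclideanSpace ℂ (Fin n)))
    (hopen : IsOpen D) (hconv : Convex ℝ D) (hunb : ¬ Bornology.IsBounded D)
    (R : ℝ) (hR : 0 < R)
    (x y : EuclideanSpace ℂ (Fin n))
    (hx : x ∈ D \ Metric.closedBall 0 R) (hy : y ∈ D \ Metric.closedBall 0 R)
    (hxu : ¬ Bornology.IsBounded (connectedComponentIn (D \ Metric.closedBall 0 R) x))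
    (hyu : ¬ Bornology.IsBounded (connectedComponentIn (D \ Metric.closedBall 0 R) y))
    (hne : connectedComponentIn (D \ Metric.closedBall 0 R) x ≠
      connectedComponentIn (D \ Metric.closedBall 0 R) y) :
    ∃ v : EuclideanSpace ℂ (Fin n), ‖v‖ = 1 ∧
      ∀ u : EuclideanSpace ℂ (Fin n),
        (‖u‖ = 1 ∧ ∀ z ∈ D, ∀ t : ℝ, 0 ≤ t → z + t • u ∈ D) ↔ (u = v ∨ u = -v) := by
  classical
  set S := D \ Metric.closedBall (0:EuclideanSpace ℂ (Fin n)) R with hS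
  have hSD : S ⊆ D := Set.diff_subset
  have hCx : connectedComponentIn S x ⊆ D := (connectedComponentIn_subset S x).trans hSD
  have hCy : connectedComponentIn S y ⊆ D := (connectedComponentIn_subset S y).trans hSD
  obtain ⟨v, hv1, hvapp⟩ := exists_far_dir hxu
  obtain ⟨w, hw1, hwapp⟩ := exists_far_dir hyu
  have hvrec : ∀ z ∈ D, ∀ t : ℝ, 0 ≤ t → z + t • v ∈ D := mem_rec hopen hconv hCx hvapp
  have hwrec : ∀ z ∈ D, ∀ t : ℝ, 0 ≤ t → z + t • w ∈ D := mem_rec hopen hconv hCy hwapp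
  -- key claim
  have key : ∀ u : EuclideanSpace ℂ (Fin n), ‖u‖ = 1 → (∀ z ∈ D, ∀ t : ℝ, 0 ≤ t → z + t • u ∈ D) →
      u = -v ∨ u = -w := by
    intro u hu hurec
    by_contra hcon
    push_neg at hcon
    obtain ⟨huv, huw⟩ := hcon
    have hvu : -1 < ⟪v,u⟫ := by
      have hne0 : v + u ≠ 0 := fun h => huv (eq_neg_of_add_eq_zero_right h)
      have hpos : 0 < ‖v + u‖^2 := pow_pos (norm_pos_iff.mpr hne0) 2
      have hsq := norm_add_sq_real v u
      rw [hv1, hu] at hsq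
      nlinarith
    have hwu : -1 < ⟪w,u⟫ := by
      have hne0 : w + u ≠ 0 := fun h => huw (eq_neg_of_add_eq_zero_right h)
      have hpos : 0 < ‖w + u‖^2 := pow_pos (norm_pos_iff.mpr hne0) 2
      have hsq := norm_add_sq_real w u
      rw [hw1, hu] at hsq
      nlinarith
    set δ : ℝ := min ((1 + ⟪v,u⟫)/2) ((1 + ⟪w,u⟫)/2) with hδ
    have hδ0 : 0 < δ := lt_min (by linarith) (by linarith)
    have hδ1 : δ ≤ 1 := by
      have h1 : ⟪v,u⟫ ≤ 1 := by
        have := abs_real_inner_le_norm v u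
        rw [hv1, hu, mul_one] at this
        exact (abs_le.mp this).2
      exact (min_le_left _ _).trans (by linarith)
    obtain ⟨z, hzC, hzi, hzR⟩ := far_point_data hv1 hu hvapp hδ0 (min_le_left _ _) hR
    obtain ⟨p, hpC, hpi, hpR⟩ := far_point_data hw1 hu hwapp hδ0 (min_le_right _ _) hR
    have hconn := connect_comp hconv hR hu hurec hδ1 (hCx hzC) (hCy hpC) hzi hpi hzR hpR
    have e1 : connectedComponentIn S x = connectedComponentIn S z := connectedComponentIn_eq hzC
    have e2 : connectedComponentIn S y = connectedComponentIn S p := connectedComponentIn_eq hpC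
    exact hne (by rw [e1, e2]; exact hconn)
  -- w = -v
  have hwv : w = -v := by
    rcases key v hv1 hvrec with h | h
    · exfalso
      have h0 : v + v = 0 := by nth_rewrite 2 [h]; simp
      have : (2:ℝ) • v = 0 := by rw [two_smul]; exact h0
      have hv0 : v = 0 := by
        rcases smul_eq_zero.mp this with h2 | h2
        · norm_num at h2
        · exact h2
      rw [hv0, norm_zero] at hv1
      norm_num at hv1
    · exact (neg_eq_iff_eq_neg.mpr h).symm
  refine ⟨v, hv1, fun u => ⟨?_, ?_⟩⟩
  · rintro ⟨hu1, hurec⟩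
    rcases key u hu1 hurec with h | h
    · exact Or.inr h
    · left
      rw [h, hwv, neg_neg]
  · rintro (rfl | rfl)
    · exact ⟨hv1, hvrec⟩
    · refine ⟨by rw [norm_neg, hv1], ?_⟩
      intro z hz t ht
      have := hwrec z hz t ht
      rwa [hwv] at this
end

section
/- Let $D \subset \mathbb{C}^n$ be an unbounded convex open set whose only directions at infinity are $v$ and $-v$ for some unit vector $v$. Then there exists $R_0 > 0$ such that for all $R \geq R_0$ the set $D \setminus \overline{B(0,R)}$ has at least two distinct unbounded connected components. -/
open Bornology Metric Set Filter Topology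

/-- If an open convex set has a ray (from some base point) inside its closure,
then the ray direction is a direction at infinity for the whole set. -/
lemma stmt5_aux_ray {E : Type*} [NormedAddCommGroup E] [NormedSpace ℝ E] {D : Set E}
    (hopen : IsOpen D) (hconv : Convex ℝ D) {z₀ u : E}
    (h : ∀ t : ℝ, 0 ≤ t → z₀ + t • u ∈ closure D) :
    ∀ z ∈ D, ∀ t : ℝ, 0 ≤ t → z + t • u ∈ D := by
  intro z hz t ht
  obtain ⟨ε, εpos, hball⟩ := Metric.isOpen_iff.mp hopen z hz
  set δ := ‖z - z₀‖ with hδdef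
  have hδ : 0 ≤ δ := norm_nonneg _
  set l := min (1/2 : ℝ) (ε / (2*(δ+1))) with hldef
  have hl0 : 0 < l := lt_min (by norm_num) (by positivity)
  have hl2 : l ≤ 1/2 := min_le_left _ _
  have h1l : (0:ℝ) < 1 - l := by linarith
  set w := (1/(1-l)) • (z - l • z₀) with hwdef
  have hwz : w - z = (l/(1-l)) • (z - z₀) := by
    rw [hwdef]; match_scalars <;> (field_simp; try ring)
  have hwD : w ∈ D := by
    apply hball
    rw [Metric.mem_ball, dist_eq_norm, hwz, norm_smul]
    have h1 : |l/(1-l)| = l/(1-l) := abs_of_pos (by positivity)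
    have h2 : l/(1-l) ≤ 2*l := by rw [div_le_iff₀ h1l]; nlinarith
    have hle : l * (2*(δ+1)) ≤ ε := (le_div_iff₀ (by positivity)).mp (min_le_right _ _)
    have h3 : 2*l*δ < ε := by nlinarith
    calc |l/(1-l)| * δ ≤ (2*l) * δ := by
          rw [h1]; exact mul_le_mul_of_nonneg_right h2 hδ
      _ < ε := by linarith
  have hc : z₀ + (t/l) • u ∈ closure D := h _ (div_nonneg ht hl0.le)
  have hcomb := hconv.combo_interior_closure_mem_interior
      (by rwa [hopen.interior_eq]) hc h1l hl0.le (by ring)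
  rw [hopen.interior_eq] at hcomb
  have key : (1-l) • w + l • (z₀ + (t/l) • u) = z + t • u := by
    rw [hwdef]; match_scalars <;> (field_simp; try ring)
  rwa [key] at hcomb

set_option maxHeartbeats 1000000 in
theorem stmt_5 (n : ℕ) (D : Set (EuclideanSpace ℂ (Fin n)))
    (hopen : IsOpen D) (hconv : Convex ℝ D) (hunb : ¬ Bornology.IsBounded D)
    (v : EuclideanSpace ℂ (Fin n)) (hv : ‖v‖ = 1)
    (hdirs : ∀ u : EuclideanSpace ℂ (Fin n),
      (‖u‖ = 1 ∧ ∀ z ∈ D, ∀ t : ℝ, 0 ≤ t → z + t • u ∈ D) ↔ (u = v ∨ u = -v)) :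
    ∃ R₀ : ℝ, 0 < R₀ ∧ ∀ R : ℝ, R₀ ≤ R →
      ∃ x ∈ D \ Metric.closedBall 0 R, ∃ y ∈ D \ Metric.closedBall 0 R,
        ¬ Bornology.IsBounded (connectedComponentIn (D \ Metric.closedBall 0 R) x) ∧
        ¬ Bornology.IsBounded (connectedComponentIn (D \ Metric.closedBall 0 R) y) ∧
        connectedComponentIn (D \ Metric.closedBall 0 R) x ≠
          connectedComponentIn (D \ Metric.closedBall 0 R) y := by
  -- the real-linear functional f z = Re⟪v, z⟫
  set f : EuclideanSpace ℂ (Fin n) → ℝ := fun z => (inner ℝ v z : ℝ) with hfdef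
  have hfcont : Continuous f := by
    show Continuous fun z : EuclideanSpace ℂ (Fin n) => (inner ℝ v z : ℝ)
    exact continuous_const.inner continuous_id
  have hfv : f v = 1 := by
    show (inner ℝ v v : ℝ) = 1
    rw [real_inner_self_eq_norm_sq, hv]; norm_num
  have hfbound : ∀ z : EuclideanSpace ℂ (Fin n), |f z| ≤ ‖z‖ := by
    intro z
    calc |f z| ≤ ‖v‖ * ‖z‖ := abs_real_inner_le_norm v z
      _ = ‖z‖ := by rw [hv, one_mul]
  -- D is nonempty
  obtain ⟨z₀, hz₀⟩ : D.Nonempty :=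
    Set.nonempty_iff_ne_empty.mpr (fun h => hunb (h ▸ Bornology.isBounded_empty))
  -- invariance under the full line in direction v
  have hline : ∀ z ∈ D, ∀ t : ℝ, z + t • v ∈ D := by
    have hpos := ((hdirs v).mpr (Or.inl rfl)).2
    have hneg := ((hdirs (-v)).mpr (Or.inr rfl)).2
    intro z hz t
    rcases le_or_gt 0 t with h | h
    · exact hpos z hz t h
    · have := hneg z hz (-t) (by linarith)
      simpa [smul_neg, neg_smul] using this
  -- the slice {z ∈ D | f z = 0} is bounded
  have hslice : ∃ M : ℝ, ∀ z ∈ D, f z = 0 → ‖z‖ ≤ M := by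
    by_contra hS
    push_neg at hS
    obtain ⟨w₀, hw₀D, hw₀f, -⟩ := hS 0
    choose y hyD hyf hyn using fun k : ℕ => hS (k + ‖w₀‖)
    have hpos : ∀ k : ℕ, (k : ℝ) < ‖y k - w₀‖ := by
      intro k
      have h1 : (k : ℝ) + ‖w₀‖ < ‖y k‖ := hyn k
      have h2 : ‖y k‖ - ‖w₀‖ ≤ ‖y k - w₀‖ := by
        have := norm_sub_le (y k - w₀) (-w₀)
        simp only [sub_neg_eq_add, sub_add_cancel] at this
        have h3 := norm_add_le (y k - w₀) w₀
        simp only [sub_add_cancel] at h3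
        linarith
      linarith
    set U : ℕ → EuclideanSpace ℂ (Fin n) := fun k => ‖y k - w₀‖⁻¹ • (y k - w₀) with hUdef
    have hUnorm : ∀ k, ‖U k‖ = 1 := by
      intro k
      have hne : ‖y k - w₀‖ ≠ 0 := (lt_of_le_of_lt (Nat.cast_nonneg k) (hpos k)).ne'
      rw [hUdef]
      simp only [norm_smul, norm_inv, norm_norm]
      field_simp
    have hUmem : ∀ k, U k ∈ Metric.sphere (0:EuclideanSpace ℂ (Fin n)) 1 := by
      intro k; rw [mem_sphere_zero_iff_norm]; exact hUnorm k
    obtain ⟨u, huS, φ, hφ, htend⟩ := (isCompact_sphere (0:EuclideanSpace ℂ (Fin n)) 1).tendsto_subseq hUmem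
    have hunorm : ‖u‖ = 1 := mem_sphere_zero_iff_norm.mp huS
    -- the ray from w₀ in direction u is in the closure of D
    have hclos : ∀ t : ℝ, 0 ≤ t → w₀ + t • u ∈ closure D := by
      intro t ht
      have htends : Tendsto (fun k => w₀ + t • (U (φ k))) atTop (𝓝 (w₀ + t • u)) :=
        tendsto_const_nhds.add (htend.const_smul t)
      refine mem_closure_of_tendsto htends ?_
      filter_upwards [eventually_ge_atTop ⌈t⌉₊] with k hk
      have hφk : (⌈t⌉₊ : ℝ) ≤ (φ k : ℝ) := by
        exact_mod_cast le_trans hk (hφ.le_apply)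
      have htle : t ≤ ‖y (φ k) - w₀‖ := by
        have := hpos (φ k)
        have := Nat.le_ceil t
        linarith
      have hrpos : (0:ℝ) < ‖y (φ k) - w₀‖ := lt_of_le_of_lt (Nat.cast_nonneg _) (hpos (φ k))
      set μ := t * ‖y (φ k) - w₀‖⁻¹ with hμdef
      have hμ0 : 0 ≤ μ := by positivity
      have hμ1 : μ ≤ 1 := by
        rw [hμdef, ← div_eq_mul_inv, div_le_one hrpos]
        exact htle
      have hmem := hconv hw₀D (hyD (φ k)) (by linarith : (0:ℝ) ≤ 1 - μ) hμ0 (by ring)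
      have heq : (1-μ) • w₀ + μ • y (φ k) = w₀ + t • (U (φ k)) := by
        rw [hUdef, hμdef]; match_scalars <;> ring
      rwa [heq] at hmem
    -- f u = 0
    have hfu : f u = 0 := by
      have hzero : ∀ k, f (U (φ k)) = 0 := by
        intro k
        rw [hfdef, hUdef]
        simp only [real_inner_smul_right, inner_sub_right]
        rw [show (inner ℝ v (y (φ k)) : ℝ) = 0 from hyf (φ k), show (inner ℝ v w₀ : ℝ) = 0 from hw₀f]
        ring
      have h1 : Tendsto (fun k => f (U (φ k))) atTop (𝓝 (f u)) :=
        (hfcont.tendsto u).comp htend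
      have h2 : Tendsto (fun k => f (U (φ k))) atTop (𝓝 0) := by
        simp only [hzero]; exact tendsto_const_nhds
      exact tendsto_nhds_unique h1 h2
    -- so u is a direction at infinity
    have hall : ∀ z ∈ D, ∀ t : ℝ, 0 ≤ t → z + t • u ∈ D :=
      stmt5_aux_ray hopen hconv hclos
    rcases (hdirs u).mp ⟨hunorm, hall⟩ with rfl | rfl
    · rw [hfv] at hfu; norm_num at hfu
    · rw [hfdef] at hfu
      simp only [inner_neg_right] at hfu
      rw [show (inner ℝ v v : ℝ) = 1 from by rw [real_inner_self_eq_norm_sq, hv]; norm_num] at hfu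
      norm_num at hfu
  obtain ⟨M, hM⟩ := hslice
  refine ⟨max M 1, lt_of_lt_of_le one_pos (le_max_right _ _), ?_⟩
  intro R hR
  have hR1 : (1:ℝ) ≤ R := le_trans (le_max_right _ _) hR
  have hRM : M ≤ R := le_trans (le_max_left _ _) hR
  set T : ℝ := R + ‖z₀‖ + 1 with hTdef
  have hT0 : 0 < T := by have := norm_nonneg z₀; simp only [hTdef]; linarith
  -- general: for a unit direction w which is a direction at infinity,
  -- the point z₀ + T • w is outside the ball and its component is unbounded
  have key : ∀ w : EuclideanSpace ℂ (Fin n), ‖w‖ = 1 → (∀ z ∈ D, ∀ t : ℝ, 0 ≤ t → z + t • w ∈ D) →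
      (z₀ + T • w ∈ D \ Metric.closedBall 0 R) ∧
      ¬ Bornology.IsBounded (connectedComponentIn (D \ Metric.closedBall 0 R) (z₀ + T • w)) := by
    intro w hw hdir
    have hlow : ∀ t : ℝ, |t| - ‖z₀‖ ≤ ‖z₀ + t • w‖ := by
      intro t
      have h1 : ‖t • w‖ = |t| := by rw [norm_smul, hw, mul_one, Real.norm_eq_abs]
      have h2 : ‖t • w‖ ≤ ‖z₀ + t • w‖ + ‖z₀‖ := by
        calc ‖t • w‖ = ‖(z₀ + t • w) - z₀‖ := by congr 1; abel
          _ ≤ ‖z₀ + t • w‖ + ‖z₀‖ := norm_sub_le _ _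
      linarith [h1 ▸ h2]
    have hmemD : ∀ t : ℝ, T ≤ t → z₀ + t • w ∈ D \ Metric.closedBall 0 R := by
      intro t ht
      refine ⟨hdir z₀ hz₀ t (le_trans hT0.le ht), ?_⟩
      simp only [Metric.mem_closedBall, dist_zero_right, not_le]
      have habs : |t| = t := abs_of_pos (lt_of_lt_of_le hT0 ht)
      have := hlow t
      rw [habs] at this
      have : R + 1 ≤ ‖z₀ + t • w‖ := by simp only [hTdef] at ht; linarith
      linarith
    have hxmem : z₀ + T • w ∈ D \ Metric.closedBall 0 R := hmemD T le_rfl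
    refine ⟨hxmem, ?_⟩
    -- the ray is inside the connected component
    set ray : Set (EuclideanSpace ℂ (Fin n)) := (fun t : ℝ => z₀ + t • w) '' Set.Ici T with hraydef
    have hraycon : IsPreconnected ray :=
      isPreconnected_Ici.image _ (Continuous.continuousOn (by continuity))
    have hraysub : ray ⊆ D \ Metric.closedBall 0 R := by
      rintro - ⟨t, ht, rfl⟩; exact hmemD t ht
    have hxray : z₀ + T • w ∈ ray := ⟨T, Set.self_mem_Ici, rfl⟩
    have hsub := hraycon.subset_connectedComponentIn hxray hraysub
    intro hb
    obtain ⟨C, hC⟩ := isBounded_iff_forall_norm_le.mp hb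
    set t := max T (C + ‖z₀‖ + 1) with htdef
    have htray : z₀ + t • w ∈ ray := ⟨t, Set.mem_Ici.mpr (le_max_left _ _), rfl⟩
    have hnorm := hC _ (hsub htray)
    have habs : |t| = t := abs_of_pos (lt_of_lt_of_le hT0 (le_max_left _ _))
    have hlow' := hlow t
    rw [habs] at hlow'
    have : C + ‖z₀‖ + 1 ≤ t := le_max_right _ _
    linarith
  have hdirv : ∀ z ∈ D, ∀ t : ℝ, 0 ≤ t → z + t • v ∈ D := fun z hz t _ => hline z hz t
  have hdirnv : ∀ z ∈ D, ∀ t : ℝ, 0 ≤ t → z + t • (-v) ∈ D := by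
    intro z hz t _
    have := hline z hz (-t)
    simpa [smul_neg, neg_smul] using this
  obtain ⟨hxmem, hxunb⟩ := key v hv hdirv
  obtain ⟨hymem, hyunb⟩ := key (-v) (by rw [norm_neg, hv]) hdirnv
  refine ⟨z₀ + T • v, hxmem, z₀ + T • (-v), hymem, hxunb, hyunb, ?_⟩
  intro heq
  -- both points lie in the same connected component; IVT on f gives a point
  -- of the slice outside the ball, contradiction
  set F := D \ Metric.closedBall 0 R with hFdef
  set Cx := connectedComponentIn F (z₀ + T • v) with hCxdef
  have hCxpre : IsPreconnected Cx := isPreconnected_connectedComponentIn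
  have hxC : z₀ + T • v ∈ Cx := mem_connectedComponentIn hxmem
  have hyC : z₀ + T • (-v) ∈ Cx := by
    rw [heq]; exact mem_connectedComponentIn hymem
  have hzbnd : |f z₀| ≤ ‖z₀‖ := hfbound z₀
  have hfx : f (z₀ + T • v) = f z₀ + T := by
    simp only [hfdef, inner_add_right, real_inner_smul_right]
    rw [show (inner ℝ v v : ℝ) = 1 from by rw [real_inner_self_eq_norm_sq, hv]; norm_num]
    ring
  have hfy : f (z₀ + T • (-v)) = f z₀ - T := by
    simp only [hfdef, inner_add_right, real_inner_smul_right, inner_neg_right]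
    rw [show (inner ℝ v v : ℝ) = 1 from by rw [real_inner_self_eq_norm_sq, hv]; norm_num]
    ring
  have hTbig : ‖z₀‖ + 1 ≤ T := by simp only [hTdef]; linarith
  have h0mem : (0:ℝ) ∈ Set.Icc (f (z₀ + T • (-v))) (f (z₀ + T • v)) := by
    rw [hfx, hfy]
    constructor
    · have := abs_le.mp hzbnd; linarith
    · have := abs_le.mp hzbnd; linarith
  obtain ⟨z, hzC, hz0⟩ := hCxpre.intermediate_value hyC hxC hfcont.continuousOn h0mem
  have hzF : z ∈ F := connectedComponentIn_subset F _ hzC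
  have hzD : z ∈ D := hzF.1
  have hzball : R < ‖z‖ := by
    have := hzF.2
    simpa [Metric.mem_closedBall, dist_zero_right, not_le] using this
  have := hM z hzD hz0
  linarith
end

section
/- Let $D$ be an unbounded convex open subset of $\mathbb{C}^n$, and suppose $v$ and $-v$ are the only directions at infinity for $D$. Let $z_0 \in D$ and let $H$ be the real affine hyperplane through $z_0$ orthogonal to $v$. Then $H \cap D$ is a bounded set. -/
open Filter Topology

theorem stmt_14 (n : ℕ) (D : Set (EuclideanSpace ℂ (Fin n)))
    (hopen : IsOpen D) (hconv : Convex ℝ D) (hunb : ¬ Bornology.IsBounded D)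
    (v : EuclideanSpace ℂ (Fin n)) (hv : ‖v‖ = 1)
    (hdirs : ∀ u : EuclideanSpace ℂ (Fin n),
      (‖u‖ = 1 ∧ ∀ z ∈ D, ∀ t : ℝ, 0 ≤ t → z + t • u ∈ D) ↔ (u = v ∨ u = -v))
    (z₀ : EuclideanSpace ℂ (Fin n)) (hz₀ : z₀ ∈ D) :
    Bornology.IsBounded ({z | (inner ℂ v (z - z₀) : ℂ).re = 0} ∩ D) := by
  by_contra hnb
  have hex : ∀ k : ℕ, ∃ zz, zz ∈ ({z | (inner ℂ v (z - z₀) : ℂ).re = 0} ∩ D) ∧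
      (k : ℝ) < ‖zz - z₀‖ := by
    intro k
    rw [isBounded_iff_forall_norm_le] at hnb
    push_neg at hnb
    obtain ⟨x, hx, hxk⟩ := hnb (‖z₀‖ + k)
    refine ⟨x, hx, ?_⟩
    have := norm_sub_norm_le x z₀
    linarith
  choose z hz hzk using hex
  set w : ℕ → EuclideanSpace ℂ (Fin n) := fun k => z k - z₀ with hw
  have hwpos : ∀ k, 0 < ‖w k‖ := fun k => lt_of_le_of_lt (Nat.cast_nonneg k) (hzk k)
  set u : ℕ → EuclideanSpace ℂ (Fin n) := fun k => ‖w k‖⁻¹ • w k with hu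
  have humem : ∀ k, u k ∈ Metric.sphere (0 : EuclideanSpace ℂ (Fin n)) 1 := by
    intro k
    rw [mem_sphere_zero_iff_norm]
    exact norm_smul_inv_norm (norm_pos_iff.mp (hwpos k))
  obtain ⟨u₀, hu₀mem, φ, hφ, hlim⟩ :=
    (isCompact_sphere (0 : EuclideanSpace ℂ (Fin n)) 1).tendsto_subseq humem
  -- Claim A : z₀ + t • u₀ ∈ closure D for all t ≥ 0
  have hA : ∀ t : ℝ, 0 ≤ t → z₀ + t • u₀ ∈ closure D := by
    intro t ht
    have htend : Tendsto (fun k => z₀ + t • u (φ k)) atTop (𝓝 (z₀ + t • u₀)) :=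
      tendsto_const_nhds.add (hlim.const_smul t)
    refine mem_closure_of_tendsto htend ?_
    filter_upwards [eventually_ge_atTop ⌈t⌉₊] with k hk
    have h1 : t ≤ ‖w (φ k)‖ := by
      have h2 : (⌈t⌉₊ : ℝ) ≤ (φ k : ℝ) := by
        exact_mod_cast le_trans hk (hφ.le_apply)
      have h3 : t ≤ (⌈t⌉₊ : ℝ) := Nat.le_ceil t
      have h4 := hzk (φ k)
      linarith
    set s : ℝ := t * ‖w (φ k)‖⁻¹ with hs
    have hs0 : 0 ≤ s := mul_nonneg ht (by positivity)
    have hs1 : s ≤ 1 := by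
      rw [hs]
      rw [mul_inv_le_iff₀ (hwpos (φ k))]
      linarith
    have hmem := hconv hz₀ (hz (φ k)).2 (a := 1 - s) (b := s) (by linarith) hs0 (by ring)
    have heq : (1 - s) • z₀ + s • z (φ k) = z₀ + t • u (φ k) := by
      have hzw : z (φ k) = z₀ + w (φ k) := by simp [hw]
      rw [hzw]
      simp only [hu, smul_smul, hs]
      module
    rwa [heq] at hmem
  -- Claim B : recession in closure
  have hB : ∀ x ∈ closure D, ∀ t : ℝ, 0 ≤ t → x + t • u₀ ∈ closure D := by
    intro x hx t ht
    set b : ℕ → ℝ := fun m => t / (t + m + 1) with hb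
    have hden : ∀ m : ℕ, (0:ℝ) < t + m + 1 := by intro m; positivity
    have key : ∀ m : ℕ, (1 - b m) • x + (b m) • z₀ + t • u₀ ∈ closure D := by
      intro m
      have hbm0 : 0 ≤ b m := div_nonneg ht (hden m).le
      have hbm1 : b m ≤ 1 := by
        rw [hb, div_le_one (hden m)]
        have : (0:ℝ) ≤ (m:ℝ) + 1 := by positivity
        linarith
      have hmem := (hconv.closure) hx (hA (t + m + 1) (by have := hden m; linarith))
        (a := 1 - b m) (b := b m) (by linarith) hbm0 (by ring)
      have heq : (1 - b m) • x + (b m) • (z₀ + (t + m + 1) • u₀)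
          = (1 - b m) • x + (b m) • z₀ + t • u₀ := by
        have hbt : b m * (t + m + 1) = t := div_mul_cancel₀ t (hden m).ne'
        rw [smul_add, smul_smul, hbt, add_assoc]
      rwa [heq] at hmem
    have hb0 : Tendsto b atTop (𝓝 0) := by
      apply Tendsto.div_atTop (tendsto_const_nhds)
      have : Tendsto (fun m : ℕ => (m : ℝ)) atTop atTop := tendsto_natCast_atTop_atTop
      exact tendsto_atTop_add_const_right _ 1 (tendsto_atTop_add_const_left _ t this)
    have htend : Tendsto (fun m => (1 - b m) • x + (b m) • z₀ + t • u₀) atTop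
        (𝓝 (x + t • u₀)) := by
      have h1 : Tendsto (fun m => (1 - b m) • x) atTop (𝓝 ((1 - (0:ℝ)) • x)) :=
        (tendsto_const_nhds.sub hb0).smul_const x
      have h2 : Tendsto (fun m => (b m) • z₀) atTop (𝓝 ((0:ℝ) • z₀)) :=
        hb0.smul_const z₀
      have := (h1.add h2).add (tendsto_const_nhds (x := t • u₀))
      simpa using this
    exact isClosed_closure.mem_of_tendsto htend (Eventually.of_forall key)
  -- u₀ is a direction at infinity
  have hdir : ∀ zz ∈ D, ∀ t : ℝ, 0 ≤ t → zz + t • u₀ ∈ D := by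
    intro zz hzz t ht
    have h1 : zz + (2 * t) • u₀ ∈ closure D :=
      hB zz (subset_closure hzz) (2 * t) (by linarith)
    have h2 : zz ∈ interior D := by rwa [hopen.interior_eq]
    have h3 := hconv.combo_interior_closure_mem_interior h2 h1
      (a := 1/2) (b := 1/2) (by norm_num) (by norm_num) (by norm_num)
    rw [hopen.interior_eq] at h3
    have heq : (1/2 : ℝ) • zz + (1/2 : ℝ) • (zz + (2 * t) • u₀) = zz + t • u₀ := by
      module
    rwa [heq] at h3
  have hcase := (hdirs u₀).mp ⟨mem_sphere_zero_iff_norm.mp hu₀mem, hdir⟩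
  -- inner ℂ v u₀ has zero real part
  have hfzero : (inner ℂ v u₀ : ℂ).re = 0 := by
    have hcont : Continuous (fun x : EuclideanSpace ℂ (Fin n) => (inner ℂ v x : ℂ).re) :=
      Complex.continuous_re.comp (Continuous.inner continuous_const continuous_id)
    have h1 : Tendsto (fun k => (inner ℂ v (u (φ k)) : ℂ).re) atTop
        (𝓝 ((inner ℂ v u₀ : ℂ).re)) := (hcont.tendsto u₀).comp hlim
    have h2 : ∀ k, (inner ℂ v (u k) : ℂ).re = 0 := by
      intro k
      have hz0 : (inner ℂ v (w k) : ℂ).re = 0 := (hz k).1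
      have h3 : (inner ℂ v (u k) : ℂ) = (‖w k‖⁻¹ : ℝ) • (inner ℂ v (w k) : ℂ) := by
        show (inner ℂ v (‖w k‖⁻¹ • w k) : ℂ) = _
        rw [RCLike.real_smul_eq_coe_smul (K := ℂ), inner_smul_right, Complex.real_smul]
        rfl
      rw [h3, Complex.real_smul, Complex.mul_re, Complex.ofReal_re, Complex.ofReal_im, hz0]
      ring
    have h2' : (fun k => (inner ℂ v (u (φ k)) : ℂ).re) = fun _ => (0:ℝ) :=
      funext fun k => h2 (φ k)
    rw [h2'] at h1
    exact tendsto_nhds_unique h1 tendsto_const_nhds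
  have hvv : (inner ℂ v v : ℂ).re = 1 := by
    have : (inner ℂ v v : ℂ) = (‖v‖ : ℂ) ^ 2 := inner_self_eq_norm_sq_to_K v
    rw [this, hv]
    norm_num
  rcases hcase with h | h
  · rw [h, hvv] at hfzero; norm_num at hfzero
  · rw [h, inner_neg_right, Complex.neg_re, hvv] at hfzero
    norm_num at hfzero
end

section
/- Let $F : \mathbb{B}^n \to D \subset \mathbb{C}^n$ be a biholomorphism onto a convex open set $D$, and suppose $F$ extends continuously to a map $\tilde F$ on $\overline{\mathbb{B}^n}$ with values in the one-point compactification of $\mathbb{C}^n$. If $x_1, x_2 \in \partial\mathbb{B}^n$ with $x_1 \neq x_2$, $\tilde F(x_1) \neq \infty$, and $\tilde F(x_2) \neq \infty$, then $\tilde F(x_1) \neq \tilde F(x_2)$, granted that for each boundary point $x_j$ and each $R>0$ the image $F(E^{\mathbb{B}^n}(x_j,R))$ is a convex subset of $D$. -/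
/-- The horosphere of center `ξ` and radius `R` in the unit ball of `ℂⁿ`. -/
noncomputable def horosphere (n : ℕ) (ξ : EuclideanSpace ℂ (Fin n)) (R : ℝ) :
    Set (EuclideanSpace ℂ (Fin n)) :=
  {z | ‖z‖ < 1 ∧ ‖(1 - (inner ℂ ξ z : ℂ))‖ ^ 2 / (1 - ‖z‖ ^ 2) < R}

theorem stmt_17 (n : ℕ) (D : Set (EuclideanSpace ℂ (Fin n)))
    (hDopen : IsOpen D) (hDconv : Convex ℝ D)
    (F : EuclideanSpace ℂ (Fin n) → EuclideanSpace ℂ (Fin n))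
    (hFhol : DifferentiableOn ℂ F (Metric.ball 0 1))
    (hFbij : Set.BijOn F (Metric.ball 0 1) D)
    (G : EuclideanSpace ℂ (Fin n) → EuclideanSpace ℂ (Fin n))
    (hGhol : DifferentiableOn ℂ G D)
    (hGF : ∀ z ∈ Metric.ball (0 : EuclideanSpace ℂ (Fin n)) 1, G (F z) = z)
    (hFG : ∀ w ∈ D, F (G w) = w)
    (Ftilde : EuclideanSpace ℂ (Fin n) → OnePoint (EuclideanSpace ℂ (Fin n)))
    (hcont : ContinuousOn Ftilde (Metric.closedBall 0 1))
    (hext : ∀ z ∈ Metric.ball (0 : EuclideanSpace ℂ (Fin n)) 1, Ftilde z = (F z : OnePoint (EuclideanSpace ℂ (Fin n))))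
    (x₁ x₂ : EuclideanSpace ℂ (Fin n))
    (hx₁ : x₁ ∈ Metric.sphere (0 : EuclideanSpace ℂ (Fin n)) 1)
    (hx₂ : x₂ ∈ Metric.sphere (0 : EuclideanSpace ℂ (Fin n)) 1)
    (hx₁₂ : x₁ ≠ x₂)
    (h₁ : Ftilde x₁ ≠ (OnePoint.infty : OnePoint (EuclideanSpace ℂ (Fin n))))
    (h₂ : Ftilde x₂ ≠ (OnePoint.infty : OnePoint (EuclideanSpace ℂ (Fin n))))
    (hhoro : ∀ j : Fin 2, ∀ R : ℝ, 0 < R →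
      Convex ℝ (F '' horosphere n (if j = 0 then x₁ else x₂) R)) :
    Ftilde x₁ ≠ Ftilde x₂ := by
  classical
  intro hEq
  obtain ⟨p, hp⟩ : ∃ p : EuclideanSpace ℂ (Fin n), (p : OnePoint (EuclideanSpace ℂ (Fin n))) = Ftilde x₁ :=
    OnePoint.ne_infty_iff_exists.mp h₁
  have hp₂ : (p : OnePoint (EuclideanSpace ℂ (Fin n))) = Ftilde x₂ := by rw [← hEq]; exact hp
  have hx₁n : ‖x₁‖ = 1 := by simpa using hx₁
  have hx₂n : ‖x₂‖ = 1 := by simpa using hx₂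
  -- radial points lie in the horosphere of radius 2
  have hmem : ∀ (ξ : EuclideanSpace ℂ (Fin n)), ‖ξ‖ = 1 → ∀ t : ℝ, 0 ≤ t → t < 1 →
      t • ξ ∈ horosphere n ξ 2 := by
    intro ξ hξ t ht0 ht1
    have hnorm : ‖t • ξ‖ = t := by
      rw [norm_smul, hξ, mul_one, Real.norm_eq_abs, abs_of_nonneg ht0]
    have hinner : (inner ℂ ξ (t • ξ) : ℂ) = (t : ℂ) := by
      rw [RCLike.real_smul_eq_coe_smul (K := ℂ), inner_smul_right, inner_self_eq_norm_sq_to_K, hξ]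
      push_cast
      ring_nf
      norm_cast
    constructor
    · rw [hnorm]; exact ht1
    · rw [hinner, hnorm]
      have h1 : (1 : ℂ) - (t : ℂ) = ((1 - t : ℝ) : ℂ) := by push_cast; ring
      rw [h1, Complex.norm_real, Real.norm_eq_abs, abs_of_nonneg (by linarith)]
      rw [div_lt_iff₀ (by nlinarith)]
      nlinarith
  -- the sequence u k → 1 from below
  have hulim0 : Filter.Tendsto (fun k : ℕ => (1 : ℝ) / (k + 1)) Filter.atTop (nhds 0) :=
    tendsto_one_div_add_atTop_nhds_zero_nat
  set u : ℕ → ℝ := fun k => 1 - 1 / (k + 1) with hu_def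
  have hu0 : ∀ k, 0 ≤ u k := by
    intro k
    have h1 : (1 : ℝ) / (k + 1) ≤ 1 := by
      rw [div_le_one (by positivity)]
      have : (0:ℝ) ≤ (k:ℝ) := Nat.cast_nonneg k
      linarith
    simp only [hu_def]; linarith
  have hu1 : ∀ k, u k < 1 := by
    intro k
    have h1 : (0:ℝ) < 1 / (k + 1) := by positivity
    simp only [hu_def]; linarith
  have hulim : Filter.Tendsto u Filter.atTop (nhds 1) := by
    rw [hu_def]
    have := Filter.Tendsto.const_sub (1:ℝ) hulim0
    simpa [one_div] using this
  -- radial limits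
  have hrad : ∀ (ξ : EuclideanSpace ℂ (Fin n)), ‖ξ‖ = 1 →
      (p : OnePoint (EuclideanSpace ℂ (Fin n))) = Ftilde ξ →
      Filter.Tendsto (fun k => F (u k • ξ)) Filter.atTop (nhds p) := by
    intro ξ hξ hpξ
    have hξcb : ξ ∈ Metric.closedBall (0 : EuclideanSpace ℂ (Fin n)) 1 := by
      simp [Metric.mem_closedBall, dist_zero_right, hξ]
    have h1 : Filter.Tendsto (fun k => u k • ξ) Filter.atTop (nhds ξ) := by
      have := hulim.smul_const ξ
      simpa using this
    have hball : ∀ k, u k • ξ ∈ Metric.ball (0 : EuclideanSpace ℂ (Fin n)) 1 := by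
      intro k
      rw [mem_ball_zero_iff, norm_smul, hξ, mul_one, Real.norm_eq_abs, abs_of_nonneg (hu0 k)]
      exact hu1 k
    have h2 : Filter.Tendsto (fun k => u k • ξ) Filter.atTop
        (nhdsWithin ξ (Metric.closedBall 0 1)) :=
      tendsto_nhdsWithin_of_tendsto_nhds_of_eventually_within _ h1
        (Filter.Eventually.of_forall fun k =>
          Metric.ball_subset_closedBall (hball k))
    have h3 : Filter.Tendsto (fun k => Ftilde (u k • ξ)) Filter.atTop (nhds (Ftilde ξ)) :=
      ((hcont ξ hξcb).tendsto).comp h2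
    rw [← hpξ] at h3
    have h4 : (fun k => Ftilde (u k • ξ)) =
        fun k => ((F (u k • ξ) : OnePoint (EuclideanSpace ℂ (Fin n)))) :=
      funext fun k => hext _ (hball k)
    rw [h4] at h3
    rw [OnePoint.isOpenEmbedding_coe.tendsto_nhds_iff]
    exact h3
  -- p is not in D
  have hpD : p ∉ D := by
    intro hpmem
    have hGc : ContinuousAt G p := hGhol.continuousOn.continuousAt (hDopen.mem_nhds hpmem)
    have h5 : Filter.Tendsto (fun k => G (F (u k • x₁))) Filter.atTop (nhds (G p)) :=
      hGc.tendsto.comp (hrad x₁ hx₁n hp)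
    have h6 : (fun k => G (F (u k • x₁))) = fun k => u k • x₁ := by
      funext k
      apply hGF
      rw [mem_ball_zero_iff, norm_smul, hx₁n, mul_one, Real.norm_eq_abs,
        abs_of_nonneg (hu0 k)]
      exact hu1 k
    rw [h6] at h5
    have h7 : Filter.Tendsto (fun k => u k • x₁) Filter.atTop (nhds x₁) := by
      have := hulim.smul_const x₁
      simpa using this
    have h8 : G p = x₁ := tendsto_nhds_unique h5 h7
    obtain ⟨z, hzB, hzF⟩ := hFbij.surjOn hpmem
    have h9 : G p = z := by rw [← hzF, hGF z hzB]
    rw [h8] at h9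
    rw [← h9] at hzB
    rw [mem_ball_zero_iff, hx₁n] at hzB
    exact absurd hzB (lt_irrefl 1)
  -- p is in closure of each image horosphere
  have hclos : ∀ (ξ : EuclideanSpace ℂ (Fin n)), ‖ξ‖ = 1 →
      (p : OnePoint (EuclideanSpace ℂ (Fin n))) = Ftilde ξ →
      p ∈ closure (F '' horosphere n ξ 2) := by
    intro ξ hξ hpξ
    exact mem_closure_of_tendsto (hrad ξ hξ hpξ)
      (Filter.Eventually.of_forall fun k => ⟨u k • ξ, hmem ξ hξ _ (hu0 k) (hu1 k), rfl⟩)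
  -- horospheres are contained in the ball
  have hsub : ∀ (ξ : EuclideanSpace ℂ (Fin n)) (R : ℝ),
      horosphere n ξ R ⊆ Metric.ball (0 : EuclideanSpace ℂ (Fin n)) 1 :=
    fun ξ R z hz => mem_ball_zero_iff.mpr hz.1
  -- image formula
  have himg : ∀ S : Set (EuclideanSpace ℂ (Fin n)),
      S ⊆ Metric.ball (0 : EuclideanSpace ℂ (Fin n)) 1 → F '' S = D ∩ G ⁻¹' S := by
    intro S hS
    ext w
    constructor
    · rintro ⟨z, hz, rfl⟩
      refine ⟨hFbij.mapsTo (hS hz), ?_⟩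
      rw [Set.mem_preimage, hGF z (hS hz)]
      exact hz
    · rintro ⟨hwD, hwG⟩
      exact ⟨G w, hwG, hFG w hwD⟩
  -- horospheres are open
  have hopenS : ∀ (ξ : EuclideanSpace ℂ (Fin n)), IsOpen (horosphere n ξ 2) := by
    intro ξ
    have heq : horosphere n ξ 2 = {z : EuclideanSpace ℂ (Fin n) | ‖z‖ < 1} ∩
        {z : EuclideanSpace ℂ (Fin n) |
          ‖(1 - (inner ℂ ξ z : ℂ))‖ ^ 2 < 2 * (1 - ‖z‖ ^ 2)} := by
      ext z
      simp only [horosphere, Set.mem_setOf_eq, Set.mem_inter_iff]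
      constructor
      · rintro ⟨h1, h2⟩
        refine ⟨h1, ?_⟩
        rwa [div_lt_iff₀ (by nlinarith [norm_nonneg z])] at h2
      · rintro ⟨h1, h2⟩
        refine ⟨h1, ?_⟩
        rwa [div_lt_iff₀ (by nlinarith [norm_nonneg z])]
    rw [heq]
    apply IsOpen.inter
    · exact isOpen_lt continuous_norm continuous_const
    · apply isOpen_lt
      · exact (continuous_norm.comp
          (continuous_const.sub (Continuous.inner continuous_const continuous_id))).pow 2
      · exact continuous_const.mul (continuous_const.sub (continuous_norm.pow 2))
  -- image horospheres are open
  have hKopen : ∀ (ξ : EuclideanSpace ℂ (Fin n)), IsOpen (F '' horosphere n ξ 2) := by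
    intro ξ
    rw [himg _ (hsub ξ 2)]
    exact hGhol.continuousOn.isOpen_inter_preimage hDopen (hopenS ξ)
  -- convexity of the two image horospheres
  have hK₁conv : Convex ℝ (F '' horosphere n x₁ 2) := by
    have := hhoro 0 2 (by norm_num)
    simpa using this
  have hK₂conv : Convex ℝ (F '' horosphere n x₂ 2) := by
    have := hhoro 1 2 (by norm_num)
    rwa [if_neg (by decide)] at this
  -- the base point
  have hw₀ : ∀ (ξ : EuclideanSpace ℂ (Fin n)), ‖ξ‖ = 1 →
      F 0 ∈ F '' horosphere n ξ 2 := by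
    intro ξ hξ
    refine ⟨0, ?_, rfl⟩
    have := hmem ξ hξ 0 le_rfl one_pos
    rwa [zero_smul] at this
  set w₀ : EuclideanSpace ℂ (Fin n) := F 0 with hw₀def
  set s : ℕ → ℝ := fun k => 1 / (k + 2) with hs_def
  have hs0 : ∀ k, 0 < s k := by intro k; positivity
  have hs1 : ∀ k, s k < 1 := by
    intro k
    rw [hs_def]
    rw [div_lt_one (by positivity)]
    have : (0:ℝ) ≤ (k:ℝ) := Nat.cast_nonneg k
    linarith
  set q : ℕ → EuclideanSpace ℂ (Fin n) := fun k => (1 - s k) • p + s k • w₀ with hq_def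
  have hq_seg : ∀ k, q k ∈ openSegment ℝ p w₀ := by
    intro k
    exact ⟨1 - s k, s k, by linarith [hs1 k], hs0 k, by ring, rfl⟩
  -- q k lies in both image horospheres
  have hqK : ∀ (ξ : EuclideanSpace ℂ (Fin n)), ‖ξ‖ = 1 →
      (p : OnePoint (EuclideanSpace ℂ (Fin n))) = Ftilde ξ →
      Convex ℝ (F '' horosphere n ξ 2) →
      ∀ k, q k ∈ F '' horosphere n ξ 2 := by
    intro ξ hξ hpξ hconv k
    have hw₀i : w₀ ∈ interior (F '' horosphere n ξ 2) := by
      rw [(hKopen ξ).interior_eq]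
      exact hw₀ ξ hξ
    have h2 := hconv.openSegment_closure_interior_subset_interior
      (hclos ξ hξ hpξ) hw₀i (hq_seg k)
    rwa [(hKopen ξ).interior_eq] at h2
  set z : ℕ → EuclideanSpace ℂ (Fin n) := fun k => G (q k) with hz_def
  have hzq : ∀ k, F (z k) = q k ∧ z k ∈ horosphere n x₁ 2 ∧ z k ∈ horosphere n x₂ 2 := by
    intro k
    obtain ⟨a, haS, haF⟩ := hqK x₁ hx₁n hp hK₁conv k
    obtain ⟨b, hbS, hbF⟩ := hqK x₂ hx₂n hp₂ hK₂conv k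
    have hGa : G (q k) = a := by rw [← haF, hGF a (hsub x₁ 2 haS)]
    have hGb : G (q k) = b := by rw [← hbF, hGF b (hsub x₂ 2 hbS)]
    refine ⟨?_, ?_, ?_⟩
    · show F (G (q k)) = q k
      rw [hGa, haF]
    · show G (q k) ∈ horosphere n x₁ 2
      rw [hGa]; exact haS
    · show G (q k) ∈ horosphere n x₂ 2
      rw [hGb]; exact hbS
  -- q tends to p
  have hslim : Filter.Tendsto s Filter.atTop (nhds 0) := by
    have h1 : Filter.Tendsto (fun k : ℕ => (1:ℝ)/((k+1 : ℕ) + 1)) Filter.atTop (nhds 0) :=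
      hulim0.comp (Filter.tendsto_add_atTop_nat 1)
    have h2 : (fun k : ℕ => (1:ℝ)/((k+1 : ℕ) + 1)) = s := by
      funext k
      rw [hs_def]
      push_cast
      ring_nf
    rwa [h2] at h1
  have hqlim : Filter.Tendsto q Filter.atTop (nhds p) := by
    have h1 : Filter.Tendsto (fun k => (1 - s k) • p + s k • w₀) Filter.atTop
        (nhds ((1 - (0:ℝ)) • p + (0:ℝ) • w₀)) :=
      ((Filter.Tendsto.const_sub (1:ℝ) hslim).smul_const p).add (hslim.smul_const w₀)
    simpa using h1
  have hFz : Filter.Tendsto (fun k => F (z k)) Filter.atTop (nhds p) := by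
    have : (fun k => F (z k)) = q := funext fun k => (hzq k).1
    rwa [this]
  -- key convergence lemma
  have hkey : ∀ (ξ : EuclideanSpace ℂ (Fin n)), ‖ξ‖ = 1 →
      (∀ k, z k ∈ horosphere n ξ 2) → Filter.Tendsto z Filter.atTop (nhds ξ) := by
    intro ξ hξ hzS
    apply Filter.tendsto_of_subseq_tendsto
    intro ns hns
    obtain ⟨z', hz'cb, φ, hφ, hlim⟩ :=
      (isCompact_closedBall (0 : EuclideanSpace ℂ (Fin n)) 1).tendsto_subseq
        (x := fun i => z (ns i))
        (fun i => Metric.ball_subset_closedBall (hsub ξ 2 (hzS (ns i))))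
    refine ⟨φ, ?_⟩
    have hFsub : Filter.Tendsto (fun i => F (z (ns (φ i)))) Filter.atTop (nhds p) :=
      hFz.comp (hns.comp hφ.tendsto_atTop)
    have hz'ξ : z' = ξ := by
      rcases lt_or_eq_of_le (mem_closedBall_zero_iff.mp hz'cb) with hlt | heq
      · exfalso
        have hz'B : z' ∈ Metric.ball (0 : EuclideanSpace ℂ (Fin n)) 1 :=
          mem_ball_zero_iff.mpr hlt
        have hFc : ContinuousAt F z' :=
          hFhol.continuousOn.continuousAt (Metric.isOpen_ball.mem_nhds hz'B)
        have h10 : Filter.Tendsto (fun i => F (z (ns (φ i)))) Filter.atTop (nhds (F z')) :=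
          hFc.tendsto.comp hlim
        have hFz' : F z' = p := tendsto_nhds_unique h10 hFsub
        exact hpD (hFz' ▸ hFbij.mapsTo hz'B)
      · have hle : ‖(1 - (inner ℂ ξ z' : ℂ))‖ ^ 2 ≤ 2 * (1 - ‖z'‖ ^ 2) := by
          have hf : Filter.Tendsto
              (fun i => ‖(1 - (inner ℂ ξ (z (ns (φ i))) : ℂ))‖ ^ 2) Filter.atTop
              (nhds (‖(1 - (inner ℂ ξ z' : ℂ))‖ ^ 2)) := by
            have hc : Continuous (fun w : EuclideanSpace ℂ (Fin n) =>
                ‖(1 - (inner ℂ ξ w : ℂ))‖ ^ 2) :=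
              (continuous_norm.comp
                (continuous_const.sub (Continuous.inner continuous_const continuous_id))).pow 2
            exact (hc.tendsto z').comp hlim
          have hg : Filter.Tendsto
              (fun i => 2 * (1 - ‖z (ns (φ i))‖ ^ 2)) Filter.atTop
              (nhds (2 * (1 - ‖z'‖ ^ 2))) := by
            have hc : Continuous (fun w : EuclideanSpace ℂ (Fin n) => 2 * (1 - ‖w‖ ^ 2)) :=
              continuous_const.mul (continuous_const.sub (continuous_norm.pow 2))
            exact (hc.tendsto z').comp hlim
          refine le_of_tendsto_of_tendsto' hf hg ?_
          intro i
          obtain ⟨hn1, hn2⟩ := hzS (ns (φ i))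
          have := (div_lt_iff₀ (by nlinarith [norm_nonneg (z (ns (φ i)))])).mp hn2
          linarith
        rw [heq] at hle
        have habs : ‖(1 - (inner ℂ ξ z' : ℂ))‖ = 0 := by
          have h0 : ‖(1 - (inner ℂ ξ z' : ℂ))‖ ^ 2 ≤ 0 := by
            simpa using hle
          nlinarith [norm_nonneg (1 - (inner ℂ ξ z' : ℂ))]
        have hinner1 : (inner ℂ ξ z' : ℂ) = 1 := by
          have := norm_eq_zero.mp habs
          have h1 := sub_eq_zero.mp this
          exact h1.symm
        have hnsq : ‖ξ - z'‖ ^ 2 = 0 := by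
          rw [@norm_sub_sq ℂ, hξ, heq, hinner1]
          simp
          norm_num
        have : ξ - z' = 0 := by
          have := pow_eq_zero_iff (n := 2) (by norm_num) |>.mp hnsq
          exact norm_eq_zero.mp this
        have := sub_eq_zero.mp this
        exact this.symm
    rw [hz'ξ] at hlim
    exact hlim
  have hlim₁ : Filter.Tendsto z Filter.atTop (nhds x₁) := hkey x₁ hx₁n fun k => (hzq k).2.1
  have hlim₂ : Filter.Tendsto z Filter.atTop (nhds x₂) := hkey x₂ hx₂n fun k => (hzq k).2.2
  exact hx₁₂ (tendsto_nhds_unique hlim₁ hlim₂)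
end
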